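/- arXiv:1605.06222 — 5 statements merged into one kernel-verified Lean document; each statement's English description precedes it below -/
import Mathlib

section
/- Let Γ be a finite group, K a Γ-simplicial complex and L an induced Γ-subcomplex of K. If K strongly Γ-collapses to L, then the face poset FK strongly Γ-collapses to FL. -/
/-- An abstract simplicial complex on the vertex type `V`: a family of finite subsets of `V`
closed under taking subsets. -/
structure Cplx (V : Type*) where
  faces : Set (Set V)
  finite_mem : ∀ σ ∈ faces, Set.Finite σ
  down_closed : ∀ σ ∈ faces, ∀ τ ⊆ σ, τ ∈ faces

/-- The vertex set of a simplicial complex. -/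
def Cplx.verts {V : Type*} (K : Cplx V) : Set V := {v | ({v} : Set V) ∈ K.faces}

/-- `a` is an action of the group `Γ` on the vertex type of `K` by simplicial automorphisms. -/
def IsCplxAction (Γ : Type*) [Group Γ] {V : Type*} (a : Γ → V → V) (K : Cplx V) : Prop :=
  (∀ v, a 1 v = v) ∧ (∀ γ γ' : Γ, ∀ v, a (γ * γ') v = a γ (a γ' v)) ∧
    ∀ γ : Γ, ∀ σ ∈ K.faces, (a γ) '' σ ∈ K.faces

/-- A simplicial multi-map from `K` to `L`: it assigns to each vertex of `K` a nonempty subset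
of the vertices of `L`, so that `⋃ v ∈ σ, η v` is a simplex of `L` for every simplex `σ` of
`K`. -/
def IsMultiMap {V W : Type*} (K : Cplx V) (L : Cplx W) (η : V → Set W) : Prop :=
  (∀ v ∈ K.verts, (η v).Nonempty) ∧ ∀ σ ∈ K.faces, (⋃ v ∈ σ, η v) ∈ L.faces

/-- A Γ-equivariant simplicial multi-map, i.e. an element of `Map_Γ(K, L)`. -/
def IsEquivMultiMap (Γ : Type*) [Group Γ] {V W : Type*} (a : Γ → V → V) (b : Γ → W → W)
    (K : Cplx V) (L : Cplx W) (η : V → Set W) : Prop :=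
  IsMultiMap K L η ∧ ∀ γ : Γ, ∀ v ∈ K.verts, η (a γ v) = (b γ) '' (η v)

/-- Pointwise order on multi-maps out of `K` (on the vertices of `K`). -/
def mmLE {V W : Type*} (K : Cplx V) (η η' : V → Set W) : Prop := ∀ v ∈ K.verts, η v ⊆ η' v

/-- An element of `Def_Γ(K, L)`: a Γ-equivariant simplicial multi-map `K → K` with
`η v = {v}` for every vertex `v` of the subcomplex `L`. -/
def IsDefMultiMap (Γ : Type*) [Group Γ] {V : Type*} (a : Γ → V → V) (K L : Cplx V)
    (η : V → Set V) : Prop :=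
  IsEquivMultiMap Γ a a K K η ∧ ∀ v ∈ L.verts, η v = {v}

/-- One step of a zigzag in `Def_Γ(K, L)`: both multi-maps lie in `Def_Γ(K, L)` and they are
comparable. -/
def cplxDefStep (Γ : Type*) [Group Γ] {V : Type*} (a : Γ → V → V) (K L : Cplx V)
    (η η' : V → Set V) : Prop :=
  IsDefMultiMap Γ a K L η ∧ IsDefMultiMap Γ a K L η' ∧ (mmLE K η η' ∨ mmLE K η' η)

/-- The Γ-simplicial complex `K` strongly Γ-collapses to its Γ-subcomplex `L`: there is a
simplicial map `f` belonging to the identity component of `Def_Γ(K, L)` (joined to the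
identity by a finite zigzag of pairwise comparable elements) whose image is contained in
`L`. -/
def CplxCollapses (Γ : Type*) [Group Γ] {V : Type*} (a : Γ → V → V) (K L : Cplx V) : Prop :=
  ∃ f : V → V, IsDefMultiMap Γ a K L (fun v => {f v}) ∧
    Relation.ReflTransGen (cplxDefStep Γ a K L) (fun v => {v}) (fun v => {f v}) ∧
    ∀ σ ∈ K.faces, f '' σ ∈ L.faces
/-- The face poset of `K`, realized as the set of nonempty simplices of `K` inside the poset
`Set V` (ordered by inclusion). -/
def facePoset {V : Type*} (K : Cplx V) : Set (Set V) := {σ | σ ∈ K.faces ∧ σ.Nonempty}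

/-- The barycentric subdivision `Sd(K) = Δ(FK)`: the simplicial complex on the nonempty
simplices of `K` whose simplices are the finite chains of the face poset of `K`. -/
def sd {V : Type*} (K : Cplx V) : Cplx (Set V) where
  faces := {c | c.Finite ∧ (∀ σ ∈ c, σ ∈ facePoset K) ∧ IsChain (· ⊆ ·) c}
  finite_mem := fun _ h => h.1
  down_closed := fun c hc d hdc =>
    ⟨hc.1.subset hdc, fun σ hσ => hc.2.1 σ (hdc hσ),
      by exact hc.2.2.mono hdc⟩

/-- An element of `Def_Γ(A, Q)` for the Γ-poset structure on `P` given by the explicit action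
`a`: an order-preserving Γ-equivariant self-map of the induced subposet `A` fixing `Q`
pointwise. -/
def IsDefPosetMapA (Γ : Type*) [Group Γ] {P : Type*} [PartialOrder P] (a : Γ → P → P)
    (A Q : Set P) (f : P → P) : Prop :=
  Set.MapsTo f A A ∧ (∀ x ∈ A, ∀ y ∈ A, x ≤ y → f x ≤ f y) ∧
    (∀ γ : Γ, ∀ x ∈ A, f (a γ x) = a γ (f x)) ∧ ∀ y ∈ Q, f y = y

/-- One step of a zigzag in `Def_Γ(A, Q)`. -/
def posetDefStepA (Γ : Type*) [Group Γ] {P : Type*} [PartialOrder P] (a : Γ → P → P)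
    (A Q : Set P) (f g : P → P) : Prop :=
  IsDefPosetMapA Γ a A Q f ∧ IsDefPosetMapA Γ a A Q g ∧
    ((∀ x ∈ A, f x ≤ g x) ∨ (∀ x ∈ A, g x ≤ f x))

/-- The induced Γ-subposet `A` strongly Γ-collapses to `Q ⊆ A`: some `f ∈ Def_Γ(A, Q)` in the
identity component of `Def_Γ(A, Q)` has image (on `A`) contained in `Q`. -/
def PosetCollapsesOnA (Γ : Type*) [Group Γ] {P : Type*} [PartialOrder P] (a : Γ → P → P)
    (A Q : Set P) : Prop :=
  ∃ f : P → P, IsDefPosetMapA Γ a A Q f ∧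
    Relation.ReflTransGen (posetDefStepA Γ a A Q) id f ∧ ∀ x ∈ A, f x ∈ Q

def mlift {V : Type*} (η : V → Set V) : Set V → Set V := fun σ => ⋃ v ∈ σ, η v

lemma mlift_id {V : Type*} : mlift (fun v : V => {v}) = id := by
  funext σ; simp [mlift]

lemma vert_of_mem {V : Type*} {K : Cplx V} {σ : Set V} (hσ : σ ∈ K.faces) {v : V}
    (hv : v ∈ σ) : v ∈ K.verts :=
  K.down_closed σ hσ {v} (by simpa using hv)

lemma mlift_def {Γ V : Type*} [Group Γ] {a : Γ → V → V} {K L : Cplx V}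
    (hLK : L.faces ⊆ K.faces) {η : V → Set V} (hη : IsDefMultiMap Γ a K L η) :
    IsDefPosetMapA Γ (fun γ (σ : Set V) => (a γ) '' σ) (facePoset K) (facePoset L)
      (mlift η) := by
  obtain ⟨⟨⟨hne, hface⟩, hequiv⟩, hfix⟩ := hη
  refine ⟨?_, ?_, ?_, ?_⟩
  · rintro σ ⟨hσ, v, hv⟩
    refine ⟨hface σ hσ, ?_⟩
    obtain ⟨w, hw⟩ := hne v (vert_of_mem hσ hv)
    exact ⟨w, Set.mem_biUnion hv hw⟩
  · rintro σ hσ τ hτ hst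
    exact Set.biUnion_subset_biUnion_left hst
  · rintro γ σ ⟨hσ, -⟩
    show (⋃ v ∈ (a γ) '' σ, η v) = (a γ) '' ⋃ v ∈ σ, η v
    rw [Set.biUnion_image, Set.image_iUnion₂]
    exact Set.iUnion₂_congr fun v hv => hequiv γ v (vert_of_mem hσ hv)
  · rintro σ ⟨hσ, -⟩
    have : ∀ v ∈ σ, η v = {v} := fun v hv => hfix v (vert_of_mem hσ hv)
    show (⋃ v ∈ σ, η v) = σ
    ext x
    simp only [Set.mem_iUnion]
    constructor
    · rintro ⟨v, hv, hx⟩; rw [this v hv] at hx; simpa using hx ▸ hv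
    · intro hx; exact ⟨x, hx, by rw [this x hx]; rfl⟩

lemma mlift_step {Γ V : Type*} [Group Γ] {a : Γ → V → V} {K L : Cplx V}
    (hLK : L.faces ⊆ K.faces) {η η' : V → Set V}
    (h : cplxDefStep Γ a K L η η') :
    posetDefStepA Γ (fun γ (σ : Set V) => (a γ) '' σ) (facePoset K) (facePoset L)
      (mlift η) (mlift η') := by
  obtain ⟨h1, h2, h3⟩ := h
  refine ⟨mlift_def hLK h1, mlift_def hLK h2, ?_⟩
  rcases h3 with h3 | h3
  · left; rintro σ ⟨hσ, -⟩
    exact Set.iUnion₂_mono fun v hv => h3 v (vert_of_mem hσ hv)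
  · right; rintro σ ⟨hσ, -⟩
    exact Set.iUnion₂_mono fun v hv => h3 v (vert_of_mem hσ hv)


/-- Let Γ be a finite group, K a Γ-simplicial complex and L an induced
Γ-subcomplex of K.  If K strongly Γ-collapses to L, then the face poset FK strongly
Γ-collapses to FL. -/
theorem facePoset_collapses_of_cplxCollapses {Γ V : Type*} [Group Γ] [Finite Γ]
    (a : Γ → V → V) (K L : Cplx V) (ha : IsCplxAction Γ a K)
    (haL : ∀ γ : Γ, ∀ σ ∈ L.faces, (a γ) '' σ ∈ L.faces)
    (hLK : L.faces ⊆ K.faces)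
    (hind : ∀ σ ∈ K.faces, σ ⊆ L.verts → σ ∈ L.faces)
    (h : CplxCollapses Γ a K L) :
    PosetCollapsesOnA Γ (fun γ (σ : Set V) => (a γ) '' σ) (facePoset K) (facePoset L) := by
  obtain ⟨f, hf, hzig, himg⟩ := h
  refine ⟨mlift (fun v => {f v}), mlift_def hLK hf, ?_, ?_⟩
  · have : Relation.ReflTransGen (posetDefStepA Γ (fun γ (σ : Set V) => (a γ) '' σ) (facePoset K) (facePoset L))
        (mlift fun v => {v}) (mlift fun v => {f v}) :=
      hzig.lift mlift (fun _ _ h => mlift_step hLK h)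
    rwa [mlift_id] at this
  · rintro σ ⟨hσ, v, hv⟩
    have : mlift (fun v => {f v}) σ = f '' σ := by
      ext x; simp [mlift, eq_comm]
    rw [this]
    exact ⟨himg σ hσ, ⟨f v, Set.mem_image_of_mem f hv⟩⟩
end

section
/- Let Γ be a finite group, K a finite Γ-simplicial complex and L a Γ-subcomplex of K. If K strongly Γ-collapses to L, then the barycentric subdivision Sd(K) strongly Γ-collapses to Sd(L). -/
section SdProofAux

variable {Γ V : Type*} [Group Γ]

lemma mem_verts_of_mem {K : Cplx V} {σ : Set V} (hσ : σ ∈ K.faces) {v : V} (hv : v ∈ σ) :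
    v ∈ K.verts :=
  K.down_closed σ hσ {v} (Set.singleton_subset_iff.2 hv)

lemma subset_verts {K : Cplx V} {σ : Set V} (hσ : σ ∈ K.faces) : σ ⊆ K.verts :=
  fun _ hv => mem_verts_of_mem hσ hv

lemma sd_verts (K : Cplx V) : (sd K).verts = facePoset K := by
  ext σ
  constructor
  · rintro ⟨-, h, -⟩
    exact h σ rfl
  · intro h
    exact ⟨Set.finite_singleton σ, by simpa using h,
      Set.Subsingleton.isChain Set.subsingleton_singleton⟩

lemma chain_total {c : Set (Set V)} (hc : IsChain (· ⊆ ·) c) {σ τ : Set V}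
    (hσ : σ ∈ c) (hτ : τ ∈ c) : σ ⊆ τ ∨ τ ⊆ σ := by
  rcases eq_or_ne σ τ with rfl | h
  · exact Or.inl subset_rfl
  · exact hc hσ hτ h

variable {a : Γ → V → V} {K L : Cplx V}

lemma act_inv (ha : IsCplxAction Γ a K) (γ : Γ) (v : V) : a γ⁻¹ (a γ v) = v := by
  rw [← ha.2.1, inv_mul_cancel, ha.1]

lemma act_image_inv (ha : IsCplxAction Γ a K) (γ : Γ) (s : Set V) :
    a γ⁻¹ '' (a γ '' s) = s := by
  rw [← Set.image_comp]
  have : (a γ⁻¹ ∘ a γ) = id := funext (act_inv ha γ)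
  rw [this, Set.image_id]

lemma act_inv_mem_iff (ha : IsCplxAction Γ a K) {S : Set (Set V)}
    (hS : ∀ γ : Γ, ∀ σ ∈ S, a γ '' σ ∈ S) (γ : Γ) (σ : Set V) :
    a γ '' σ ∈ S ↔ σ ∈ S := by
  refine ⟨fun h => ?_, fun h => hS γ σ h⟩
  have := hS γ⁻¹ _ h
  rwa [act_image_inv ha] at this

/-- the union map of a multi-map -/
def uM (η : V → Set V) (σ : Set V) : Set V := ⋃ v ∈ σ, η v

lemma uM_mono {η : V → Set V} {σ τ : Set V} (h : σ ⊆ τ) : uM η σ ⊆ uM η τ :=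
  Set.biUnion_subset_biUnion_left h

lemma uM_le {η η' : V → Set V} (hle : mmLE K η η') {σ : Set V} (hσ : σ ∈ K.faces) :
    uM η σ ⊆ uM η' σ :=
  Set.iUnion₂_mono fun v hv => hle v (mem_verts_of_mem hσ hv)

lemma uM_mem {η : V → Set V} (hη : IsMultiMap K K η) {σ : Set V} (hσ : σ ∈ facePoset K) :
    uM η σ ∈ facePoset K := by
  refine ⟨hη.2 σ hσ.1, ?_⟩
  obtain ⟨v, hv⟩ := hσ.2
  obtain ⟨w, hw⟩ := hη.1 v (mem_verts_of_mem hσ.1 hv)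
  exact ⟨w, Set.mem_biUnion hv hw⟩

lemma uM_fix {η : V → Set V} (hfix : ∀ v ∈ L.verts, η v = {v}) {σ : Set V}
    (hσ : σ ⊆ L.verts) : uM η σ = σ := by
  unfold uM
  rw [show (⋃ v ∈ σ, η v) = ⋃ v ∈ σ, ({v} : Set V) from
    Set.iUnion₂_congr fun v hv => hfix v (hσ hv), Set.biUnion_of_singleton]

lemma uM_equiv {η : V → Set V} (heq : ∀ γ : Γ, ∀ v ∈ K.verts, η (a γ v) = a γ '' (η v))
    {σ : Set V} (hσ : σ ⊆ K.verts) (γ : Γ) : uM η (a γ '' σ) = a γ '' uM η σ := by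
  unfold uM
  rw [Set.biUnion_image, Set.image_iUnion₂]
  exact Set.iUnion₂_congr fun v hv => heq γ v (hσ hv)

open Classical in
/-- mixed multimap on the subdivision: use `η` twice on the "spread" orbit set `O`,
`η` on the downset `T`, `η'` outside -/
noncomputable def nuM (η η' : V → Set V) (O T : Set (Set V)) (σ : Set V) : Set (Set V) :=
  if σ ∈ O then {uM η σ, uM η' σ} else if σ ∈ T then {uM η σ} else {uM η' σ}

lemma nuM_cases {η η' : V → Set V} {O T : Set (Set V)} (hOT : O ⊆ T) {σ x : Set V}
    (hx : x ∈ nuM η η' O T σ) :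
    (σ ∈ T ∧ x = uM η σ) ∨ ((σ ∈ O ∨ σ ∉ T) ∧ x = uM η' σ) := by
  unfold nuM at hx
  by_cases hO : σ ∈ O
  · rw [if_pos hO] at hx
    rcases hx with h | h
    · exact Or.inl ⟨hOT hO, h⟩
    · exact Or.inr ⟨Or.inl hO, h⟩
  · rw [if_neg hO] at hx
    by_cases hT : σ ∈ T
    · rw [if_pos hT] at hx; exact Or.inl ⟨hT, hx⟩
    · rw [if_neg hT] at hx; exact Or.inr ⟨Or.inr hT, hx⟩

end SdProofAux

section SdProofAux2

variable {Γ V : Type*} [Group Γ] {a : Γ → V → V} {K L : Cplx V}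

lemma nuM_isDef (ha : IsCplxAction Γ a K)
    {η η' : V → Set V}
    (hη : IsDefMultiMap Γ a K L η) (hη' : IsDefMultiMap Γ a K L η')
    (hle : mmLE K η η')
    {O T : Set (Set V)} (hOT : O ⊆ T)
    (hTf : ∀ τ ∈ facePoset K, ∀ σ ∈ T, τ ⊆ σ → τ ∈ T)
    (hTi : ∀ γ : Γ, ∀ σ ∈ T, a γ '' σ ∈ T)
    (hOi : ∀ γ : Γ, ∀ σ ∈ O, a γ '' σ ∈ O)
    (hOmax : ∀ σ ∈ O, ∀ τ ∈ T, σ ⊆ τ → σ = τ) :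
    IsDefMultiMap Γ (fun γ (σ : Set V) => a γ '' σ) (sd K) (sd L) (nuM η η' O T) := by
  obtain ⟨⟨hmm1, heq1⟩, hfix1⟩ := hη
  obtain ⟨⟨hmm2, heq2⟩, hfix2⟩ := hη'
  -- comparability between an `η`-value and an `η'`-value
  have mixed : ∀ {c : Set (Set V)}, c ∈ (sd K).faces → ∀ σ ∈ c, ∀ τ ∈ c, σ ∈ T →
      (τ ∈ O ∨ τ ∉ T) → uM η σ ⊆ uM η' τ ∨ uM η' τ ⊆ uM η σ := by
    intro c hc σ hσ τ hτ hσT hτO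
    by_cases hst : σ ⊆ τ
    · exact Or.inl ((uM_le hle (hc.2.1 σ hσ).1).trans (uM_mono hst))
    · have hts : τ ⊆ σ := (chain_total hc.2.2 hσ hτ).resolve_left hst
      exfalso
      rcases hτO with hτO | hτT
      · exact hst (by rw [hOmax τ hτO σ hσT hts])
      · exact hτT (hTf τ (hc.2.1 τ hτ) σ hσT hts)
  refine ⟨⟨⟨?_, ?_⟩, ?_⟩, ?_⟩
  · -- nonempty values
    intro σ _
    unfold nuM
    by_cases hO : σ ∈ O
    · rw [if_pos hO]; exact ⟨uM η σ, Or.inl rfl⟩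
    · rw [if_neg hO]
      by_cases hT : σ ∈ T
      · rw [if_pos hT]; exact ⟨uM η σ, rfl⟩
      · rw [if_neg hT]; exact ⟨uM η' σ, rfl⟩
  · -- simplicial
    intro c hc
    have hsub : (⋃ σ ∈ c, nuM η η' O T σ) ⊆ (uM η '' c) ∪ (uM η' '' c) := by
      intro x hx
      obtain ⟨σ, hσ, hxσ⟩ := Set.mem_iUnion₂.1 hx
      rcases nuM_cases hOT hxσ with ⟨-, rfl⟩ | ⟨-, rfl⟩
      · exact Or.inl ⟨σ, hσ, rfl⟩
      · exact Or.inr ⟨σ, hσ, rfl⟩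
    refine ⟨((hc.1.image _).union (hc.1.image _)).subset hsub, ?_, ?_⟩
    · intro x hx
      obtain ⟨σ, hσ, hxσ⟩ := Set.mem_iUnion₂.1 hx
      rcases nuM_cases hOT hxσ with ⟨-, rfl⟩ | ⟨-, rfl⟩
      · exact uM_mem hmm1 (hc.2.1 σ hσ)
      · exact uM_mem hmm2 (hc.2.1 σ hσ)
    · intro x hx y hy _
      obtain ⟨σ, hσ, hxσ⟩ := Set.mem_iUnion₂.1 hx
      obtain ⟨τ, hτ, hyτ⟩ := Set.mem_iUnion₂.1 hy
      have htot := chain_total hc.2.2 hσ hτ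
      rcases nuM_cases hOT hxσ with ⟨hσT, rfl⟩ | ⟨hσO, rfl⟩ <;>
        rcases nuM_cases hOT hyτ with ⟨hτT, rfl⟩ | ⟨hτO, rfl⟩
      · exact htot.imp uM_mono uM_mono
      · exact mixed hc σ hσ τ hτ hσT hτO
      · exact (mixed hc τ hτ σ hσ hτT hσO).symm
      · exact htot.imp uM_mono uM_mono
  · -- equivariance
    intro γ σ hσ
    have hσfp : σ ∈ facePoset K := by rwa [sd_verts] at hσ
    have hσv : σ ⊆ K.verts := subset_verts hσfp.1
    have e1 : uM η (a γ '' σ) = a γ '' uM η σ := uM_equiv heq1 hσv γ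
    have e2 : uM η' (a γ '' σ) = a γ '' uM η' σ := uM_equiv heq2 hσv γ
    show nuM η η' O T (a γ '' σ) = (fun σ => a γ '' σ) '' nuM η η' O T σ
    unfold nuM
    by_cases hO : σ ∈ O
    · rw [if_pos hO, if_pos ((act_inv_mem_iff ha hOi γ σ).2 hO), e1, e2, Set.image_pair]
    · rw [if_neg hO, if_neg (fun h => hO ((act_inv_mem_iff ha hOi γ σ).1 h))]
      by_cases hT : σ ∈ T
      · rw [if_pos hT, if_pos ((act_inv_mem_iff ha hTi γ σ).2 hT), e1, Set.image_singleton]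
      · rw [if_neg hT, if_neg (fun h => hT ((act_inv_mem_iff ha hTi γ σ).1 h)), e2,
          Set.image_singleton]
  · -- fixes L
    intro σ hσ
    have hσfp : σ ∈ facePoset L := by rwa [sd_verts] at hσ
    have hσv : σ ⊆ L.verts := subset_verts hσfp.1
    have e1 : uM η σ = σ := uM_fix hfix1 hσv
    have e2 : uM η' σ = σ := uM_fix hfix2 hσv
    unfold nuM
    by_cases hO : σ ∈ O
    · rw [if_pos hO, e1, e2, Set.pair_eq_singleton]
    · rw [if_neg hO]
      by_cases hT : σ ∈ T
      · rw [if_pos hT, e1]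
      · rw [if_neg hT, e2]

end SdProofAux2

section SdProofAux3

variable {Γ V : Type*} [Group Γ] {a : Γ → V → V} {K L : Cplx V}

lemma nuM_path (ha : IsCplxAction Γ a K) (hfin : K.verts.Finite)
    {η η' : V → Set V}
    (hη : IsDefMultiMap Γ a K L η) (hη' : IsDefMultiMap Γ a K L η')
    (hle : mmLE K η η') :
    ∀ n (T : Set (Set V)), T ⊆ facePoset K →
      (∀ τ ∈ facePoset K, ∀ σ ∈ T, τ ⊆ σ → τ ∈ T) →
      (∀ γ : Γ, ∀ σ ∈ T, a γ '' σ ∈ T) → T.ncard ≤ n →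
      Relation.ReflTransGen (cplxDefStep Γ (fun γ (σ : Set V) => a γ '' σ) (sd K) (sd L))
        (nuM η η' ∅ T) (nuM η η' ∅ ∅) := by
  have hfp : (facePoset K).Finite :=
    (hfin.finite_subsets).subset fun σ hσ => subset_verts hσ.1
  intro n
  induction n with
  | zero =>
    intro T hTfp hTf hTi hcard
    have hTe : T = ∅ := (Set.ncard_eq_zero (hfp.subset hTfp)).1 (Nat.le_zero.1 hcard)
    rw [hTe]
  | succ n ih =>
    intro T hTfp hTf hTi hcard
    rcases Set.eq_empty_or_nonempty T with rfl | hne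
    · exact .refl
    obtain ⟨σs, hσsT, hσsmax⟩ := Set.Finite.exists_maximalFor id T (hfp.subset hTfp) hne
    set O : Set (Set V) := {τ | ∃ γ : Γ, τ = a γ '' σs} with hOdef
    have hOi : ∀ γ : Γ, ∀ σ ∈ O, a γ '' σ ∈ O := by
      rintro γ σ ⟨δ, rfl⟩
      refine ⟨γ * δ, ?_⟩
      rw [← Set.image_comp]
      exact Set.image_congr' (fun v => (ha.2.1 γ δ v).symm)
    have hOT : O ⊆ T := by rintro σ ⟨γ, rfl⟩; exact hTi γ σs hσsT
    have hσsO : σs ∈ O := ⟨1, by rw [show a (1:Γ) = id from funext ha.1, Set.image_id]⟩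
    have hOmax : ∀ σ ∈ O, ∀ τ ∈ T, σ ⊆ τ → σ = τ := by
      rintro σ ⟨γ, rfl⟩ τ hτT hsub
      have h1 : σs ⊆ a γ⁻¹ '' τ := by
        rw [← act_image_inv ha γ σs]; exact Set.image_mono hsub
      have h2 : σs = a γ⁻¹ '' τ := le_antisymm h1 (hσsmax (hTi γ⁻¹ τ hτT) h1)
      rw [h2]
      have h3 := act_image_inv ha γ⁻¹ τ
      rwa [inv_inv] at h3
    have hT'fp : T \ O ⊆ facePoset K := fun σ h => hTfp h.1
    have hT'f : ∀ τ ∈ facePoset K, ∀ σ ∈ T \ O, τ ⊆ σ → τ ∈ T \ O := by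
      rintro τ hτfp σ ⟨hσT, hσO⟩ hsub
      refine ⟨hTf τ hτfp σ hσT hsub, fun hτO => hσO ?_⟩
      rw [← hOmax τ hτO σ hσT hsub]; exact hτO
    have hT'i : ∀ γ : Γ, ∀ σ ∈ T \ O, a γ '' σ ∈ T \ O := by
      rintro γ σ ⟨hσT, hσO⟩
      exact ⟨hTi γ σ hσT, fun h => hσO ((act_inv_mem_iff ha hOi γ σ).1 h)⟩
    have hcard' : (T \ O).ncard ≤ n := by
      have hlt : (T \ O).ncard < T.ncard :=
        Set.ncard_lt_ncard ⟨Set.diff_subset, fun hsub => (hsub hσsT).2 hσsO⟩ (hfp.subset hTfp)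
      omega
    have hOe : ∀ (γ : Γ) (σ : Set V), σ ∈ (∅ : Set (Set V)) → a γ '' σ ∈ (∅ : Set (Set V)) :=
      fun γ σ h => absurd h (Set.notMem_empty σ)
    have hOe' : ∀ σ ∈ (∅ : Set (Set V)), ∀ τ ∈ T, σ ⊆ τ → σ = τ :=
      fun σ h => absurd h (Set.notMem_empty σ)
    have hDefT : IsDefMultiMap Γ (fun γ (σ : Set V) => a γ '' σ) (sd K) (sd L) (nuM η η' ∅ T) :=
      nuM_isDef ha ⟨⟨hη.1.1, hη.1.2⟩, hη.2⟩ hη' hle (Set.empty_subset T) hTf hTi hOe hOe'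
    have hDefO : IsDefMultiMap Γ (fun γ (σ : Set V) => a γ '' σ) (sd K) (sd L) (nuM η η' O T) :=
      nuM_isDef ha hη hη' hle hOT hTf hTi hOi hOmax
    have hDefT' : IsDefMultiMap Γ (fun γ (σ : Set V) => a γ '' σ) (sd K) (sd L)
        (nuM η η' ∅ (T \ O)) :=
      nuM_isDef ha hη hη' hle (Set.empty_subset _) hT'f hT'i hOe
        (fun σ h => absurd h (Set.notMem_empty σ))
    have hle1 : mmLE (sd K) (nuM η η' ∅ T) (nuM η η' O T) := by
      intro σ _
      unfold nuM
      rw [if_neg (Set.notMem_empty σ)]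
      by_cases hO : σ ∈ O
      · rw [if_pos hO, if_pos (hOT hO)]
        exact Set.singleton_subset_iff.2 (Set.mem_insert _ _)
      · rw [if_neg hO]
    have hle2 : mmLE (sd K) (nuM η η' ∅ (T \ O)) (nuM η η' O T) := by
      intro σ _
      unfold nuM
      rw [if_neg (Set.notMem_empty σ)]
      by_cases hO : σ ∈ O
      · rw [if_pos hO, if_neg (show σ ∉ T \ O from fun h => h.2 hO)]
        exact Set.singleton_subset_iff.2 (Set.mem_insert_iff.2 (Or.inr rfl))
      · rw [if_neg hO]
        by_cases hT : σ ∈ T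
        · rw [if_pos (show σ ∈ T \ O from ⟨hT, hO⟩), if_pos hT]
        · rw [if_neg (show σ ∉ T \ O from fun h => hT h.1), if_neg hT]
    have step1 : cplxDefStep Γ (fun γ (σ : Set V) => a γ '' σ) (sd K) (sd L)
        (nuM η η' ∅ T) (nuM η η' O T) := ⟨hDefT, hDefO, Or.inl hle1⟩
    have step2 : cplxDefStep Γ (fun γ (σ : Set V) => a γ '' σ) (sd K) (sd L)
        (nuM η η' O T) (nuM η η' ∅ (T \ O)) := ⟨hDefO, hDefT', Or.inr hle2⟩
    exact .head step1 (.head step2 (ih (T \ O) hT'fp hT'f hT'i hcard'))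

end SdProofAux3

section SdProofAux4

variable {Γ V : Type*} [Group Γ] {a : Γ → V → V} {K L : Cplx V}

lemma sd_of_def (ha : IsCplxAction Γ a K) {θ : V → Set V} (hθ : IsDefMultiMap Γ a K L θ) :
    IsDefMultiMap Γ (fun γ (σ : Set V) => a γ '' σ) (sd K) (sd L) (fun σ => {uM θ σ}) := by
  have hOe : ∀ (γ : Γ), ∀ σ ∈ (∅ : Set (Set V)), a γ '' σ ∈ (∅ : Set (Set V)) :=
    fun γ σ h => absurd h (Set.notMem_empty σ)
  have h := nuM_isDef (O := ∅) (T := Set.univ) ha hθ hθ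
    (fun v _ => subset_rfl) (Set.empty_subset _)
    (fun τ _ σ _ _ => Set.mem_univ τ) (fun γ σ _ => Set.mem_univ _)
    hOe (fun σ h => absurd h (Set.notMem_empty σ))
  have e : nuM θ θ ∅ Set.univ = fun σ => {uM θ σ} := by
    funext σ
    unfold nuM
    rw [if_neg (Set.notMem_empty σ), if_pos (Set.mem_univ σ)]
  rwa [e] at h

lemma sd_step (ha : IsCplxAction Γ a K) (hfin : K.verts.Finite)
    {η η' : V → Set V}
    (hη : IsDefMultiMap Γ a K L η) (hη' : IsDefMultiMap Γ a K L η')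
    (hle : mmLE K η η') :
    Relation.ReflTransGen (cplxDefStep Γ (fun γ (σ : Set V) => a γ '' σ) (sd K) (sd L))
      (fun σ => {uM η σ}) (fun σ => {uM η' σ}) := by
  have hOe : ∀ (γ : Γ), ∀ σ ∈ (∅ : Set (Set V)), a γ '' σ ∈ (∅ : Set (Set V)) :=
    fun γ σ h => absurd h (Set.notMem_empty σ)
  have hfpf : ∀ τ ∈ facePoset K, ∀ σ ∈ facePoset K, τ ⊆ σ → τ ∈ facePoset K :=
    fun τ h _ _ _ => h
  have hfpi : ∀ γ : Γ, ∀ σ ∈ facePoset K, a γ '' σ ∈ facePoset K := fun γ σ hσ =>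
    ⟨ha.2.2 γ σ hσ.1, hσ.2.image _⟩
  have hDefμ : IsDefMultiMap Γ (fun γ (σ : Set V) => a γ '' σ) (sd K) (sd L)
      (nuM η η' ∅ (facePoset K)) :=
    nuM_isDef ha hη hη' hle (Set.empty_subset _) hfpf hfpi hOe
      (fun σ h => absurd h (Set.notMem_empty σ))
  have step0 : cplxDefStep Γ (fun γ (σ : Set V) => a γ '' σ) (sd K) (sd L)
      (fun σ => {uM η σ}) (nuM η η' ∅ (facePoset K)) := by
    refine ⟨sd_of_def ha hη, hDefμ, Or.inl ?_⟩
    intro σ hσ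
    have hσfp : σ ∈ facePoset K := by rwa [sd_verts] at hσ
    show {uM η σ} ⊆ nuM η η' ∅ (facePoset K) σ
    unfold nuM
    rw [if_neg (Set.notMem_empty σ), if_pos hσfp]
  have e2 : nuM η η' ∅ (∅ : Set (Set V)) = fun σ => {uM η' σ} := by
    funext σ
    unfold nuM
    rw [if_neg (Set.notMem_empty σ), if_neg (Set.notMem_empty σ)]
  have hpath := nuM_path ha hfin hη hη' hle (facePoset K).ncard (facePoset K)
    subset_rfl hfpf hfpi le_rfl
  rw [e2] at hpath
  exact .head step0 hpath

end SdProofAux4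


/-- Let Γ be a finite group, K a finite Γ-simplicial complex and L a Γ-subcomplex
of K.  If K strongly Γ-collapses to L, then the barycentric subdivision Sd(K) strongly
Γ-collapses to Sd(L). -/
theorem sd_collapses_of_cplxCollapses {Γ V : Type*} [Group Γ] [Finite Γ]
    (a : Γ → V → V) (K L : Cplx V) (ha : IsCplxAction Γ a K)
    (haL : ∀ γ : Γ, ∀ σ ∈ L.faces, (a γ) '' σ ∈ L.faces)
    (hfin : K.verts.Finite) (hLK : L.faces ⊆ K.faces)
    (h : CplxCollapses Γ a K L) :
    CplxCollapses Γ (fun γ (σ : Set V) => (a γ) '' σ) (sd K) (sd L) := by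
  obtain ⟨f, hfDef, hfzig, hfim⟩ := h
  have rsymm : Symmetric (cplxDefStep Γ (fun γ (σ : Set V) => (a γ) '' σ) (sd K) (sd L)) :=
    fun _ _ hs => ⟨hs.2.1, hs.1, hs.2.2.symm⟩
  have lift : ∀ {x y : V → Set V}, Relation.ReflTransGen (cplxDefStep Γ a K L) x y →
      Relation.ReflTransGen (cplxDefStep Γ (fun γ (σ : Set V) => (a γ) '' σ) (sd K) (sd L))
        (fun σ => {uM x σ}) (fun σ => {uM y σ}) := by
    intro x y hxy
    induction hxy with
    | refl => exact .refl
    | tail _ hbc ih =>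
      obtain ⟨hb, hc, hor⟩ := hbc
      rcases hor with hbl | hcl
      · exact ih.trans (sd_step ha hfin hb hc hbl)
      · exact ih.trans ((@Relation.ReflTransGen.symmetric _ _ ⟨fun _ _ h => rsymm h⟩).symm _ _ (sd_step ha hfin hc hb hcl))
  have eid : (fun σ : Set V => ({uM (fun v => ({v} : Set V)) σ} : Set (Set V)))
      = fun σ : Set V => ({σ} : Set (Set V)) := by
    funext σ
    rw [show uM (fun v => ({v} : Set V)) σ = σ from Set.biUnion_of_singleton σ]
  have ef : (fun σ : Set V => ({uM (fun v => ({f v} : Set V)) σ} : Set (Set V)))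
      = fun σ : Set V => ({f '' σ} : Set (Set V)) := by
    funext σ
    congr 1
    ext x
    simp only [uM, Set.mem_iUnion, Set.mem_singleton_iff, Set.mem_image, exists_prop]
    exact ⟨fun ⟨i, hi, hx⟩ => ⟨i, hi, hx.symm⟩, fun ⟨i, hi, hx⟩ => ⟨i, hi, hx.symm⟩⟩
  refine ⟨fun σ => f '' σ, ?_, ?_, ?_⟩
  · have h1 := sd_of_def ha hfDef
    rwa [ef] at h1
  · have h2 := lift hfzig
    rwa [eid, ef] at h2
  · intro c hc
    refine ⟨hc.1.image _, ?_, ?_⟩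
    · rintro τ ⟨σ, hσ, rfl⟩
      exact ⟨hfim σ (hc.2.1 σ hσ).1, (hc.2.1 σ hσ).2.image f⟩
    · rintro x ⟨σ, hσ, rfl⟩ y ⟨τ, hτ, rfl⟩ _
      rcases chain_total hc.2.2 hσ hτ with hst | hts
      · exact Or.inl (Set.image_mono hst)
      · exact Or.inr (Set.image_mono hts)
end

section
/- Let Γ be a finite group. If (K,L) is an r-NDR pair of finite Γ-simplicial complexes, then (Sd(K), Sd(L)) is a (2r)-NDR pair. -/
/-- The neighborhood `ν_K(L) = ⋃_{v ∈ V(L)} st_K(v)` of the subcomplex `L` in `K`. -/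
def nbhd {V : Type*} (K L : Cplx V) : Cplx V where
  faces := {σ | ∃ v ∈ L.verts, insert v σ ∈ K.faces}
  finite_mem := fun σ h => by
    obtain ⟨v, -, h⟩ := h
    exact (K.finite_mem _ h).subset (Set.subset_insert _ _)
  down_closed := fun σ h τ hτσ => by
    obtain ⟨v, hv, h⟩ := h
    exact ⟨v, hv, K.down_closed _ h _ (Set.insert_subset_insert hτσ)⟩

/-- The iterated neighborhood `ν^r_K(L)` (with `ν^0_K(L) = L`). -/
def nbhdIter {V : Type*} (K L : Cplx V) : ℕ → Cplx V
  | 0 => L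
  | r + 1 => nbhd K (nbhdIter K L r)

/-- `(K, L)` is an `r`-NDR pair of Γ-simplicial complexes: there is a Γ-subcomplex `A` of `K`
containing `ν^r_K(L)` (and `L`) which strongly Γ-collapses to `L`. -/
def IsNDRPair (Γ : Type*) [Group Γ] {V : Type*} (a : Γ → V → V) (K L : Cplx V) (r : ℕ) : Prop :=
  ∃ A : Cplx V, A.faces ⊆ K.faces ∧ L.faces ⊆ A.faces ∧
    (∀ γ : Γ, ∀ σ ∈ A.faces, (a γ) '' σ ∈ A.faces) ∧
    (nbhdIter K L r).faces ⊆ A.faces ∧ CplxCollapses Γ a A L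

section Aux

open Set Relation

variable {Γ V : Type*} [Group Γ]

lemma mem_verts_of_mem_face {A : Cplx V} {σ : Set V} (hσ : σ ∈ A.faces) {v : V} (hv : v ∈ σ) :
    v ∈ A.verts :=
  A.down_closed σ hσ {v} (Set.singleton_subset_iff.2 hv)

lemma sd_verts_eq (A : Cplx V) : (sd A).verts = facePoset A := by
  ext σ
  constructor
  · intro h
    exact h.2.1 σ rfl
  · intro h
    refine ⟨Set.finite_singleton σ, by rintro τ rfl; exact h, ?_⟩
    intro x hx y hy hne
    rw [Set.mem_singleton_iff] at hx hy
    exact absurd (hx.trans hy.symm) hne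

lemma verts_mono {A B : Cplx V} (h : A.faces ⊆ B.faces) : A.verts ⊆ B.verts :=
  fun _ hv => h hv

lemma facePoset_mono {A B : Cplx V} (h : A.faces ⊆ B.faces) : facePoset A ⊆ facePoset B :=
  fun _ hσ => ⟨h hσ.1, hσ.2⟩

lemma sd_mono {A B : Cplx V} (h : A.faces ⊆ B.faces) : (sd A).faces ⊆ (sd B).faces :=
  fun c hc => ⟨hc.1, fun σ hσ => facePoset_mono h (hc.2.1 σ hσ), hc.2.2⟩

lemma nbhd_mono {K A B : Cplx V} (h : A.faces ⊆ B.faces) :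
    (nbhd K A).faces ⊆ (nbhd K B).faces := by
  rintro σ ⟨v, hv, hσ⟩
  exact ⟨v, verts_mono h hv, hσ⟩

lemma biUnion_singleton_eq_image {α β : Type*} (f : α → β) (s : Set α) :
    (⋃ x ∈ s, ({f x} : Set β)) = f '' s := by
  ext y; simp [eq_comm]

/-- Key neighborhood lemma: two neighborhood steps in the subdivision are contained in the
subdivision of one neighborhood step. -/
lemma nbhd_nbhd_sd_subset (K M : Cplx V) :
    (nbhd (sd K) (nbhd (sd K) (sd M))).faces ⊆ (sd (nbhd K M)).faces := by
  rintro c ⟨σ1, hσ1, hc⟩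
  -- hσ1 : σ1 ∈ (nbhd (sd K) (sd M)).verts, i.e. {σ1} ∈ (nbhd (sd K) (sd M)).faces
  obtain ⟨τ, hτ, hτσ1⟩ := hσ1
  rw [sd_verts_eq] at hτ
  -- hτσ1 : insert τ {σ1} ∈ (sd K).faces
  have hτK : τ ∈ facePoset K := hτσ1.2.1 τ (Set.mem_insert _ _)
  have hσ1K : σ1 ∈ facePoset K := hτσ1.2.1 σ1 (Set.mem_insert_of_mem _ rfl)
  have hτcomp : τ ⊆ σ1 ∨ σ1 ⊆ τ := by
    by_cases he : τ = σ1
    · exact Or.inl he.le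
    · exact hτσ1.2.2 (Set.mem_insert _ _) (Set.mem_insert_of_mem _ rfl) he
  refine ⟨hc.1.subset (Set.subset_insert _ _), ?_, fun x hx y hy hne =>
    hc.2.2 (Set.mem_insert_of_mem _ hx) (Set.mem_insert_of_mem _ hy) hne⟩
  intro ρ hρ
  have hρK : ρ ∈ facePoset K := hc.2.1 ρ (Set.mem_insert_of_mem _ hρ)
  have hρcomp : ρ ⊆ σ1 ∨ σ1 ⊆ ρ := by
    by_cases he : ρ = σ1
    · exact Or.inl he.le
    · exact (hc.2.2 (Set.mem_insert_of_mem _ hρ) (Set.mem_insert _ _) he)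
  refine ⟨?_, hρK.2⟩
  -- need : ρ ∈ (nbhd K M).faces
  rcases hρcomp with hρσ | hσρ
  · rcases hτcomp with hts | hst
    · -- τ ⊆ σ1, ρ ⊆ σ1 : pick v ∈ τ
      obtain ⟨v, hv⟩ := hτ.2
      refine ⟨v, mem_verts_of_mem_face hτ.1 hv, ?_⟩
      exact K.down_closed σ1 hσ1K.1 _ (Set.insert_subset (hts hv) hρσ)
    · -- σ1 ⊆ τ : then ρ ⊆ τ so ρ ∈ M.faces
      have hρM : ρ ∈ M.faces := M.down_closed τ hτ.1 ρ (hρσ.trans hst)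
      obtain ⟨v, hv⟩ := hρK.2
      refine ⟨v, mem_verts_of_mem_face hρM hv, ?_⟩
      rw [Set.insert_eq_self.2 hv]
      exact hρK.1
  · rcases hτcomp with hts | hst
    · -- τ ⊆ σ1 ⊆ ρ : pick v ∈ τ ⊆ ρ
      obtain ⟨v, hv⟩ := hτ.2
      refine ⟨v, mem_verts_of_mem_face hτ.1 hv, ?_⟩
      rw [Set.insert_eq_self.2 (hσρ (hts hv))]
      exact hρK.1
    · -- σ1 ⊆ τ : σ1 ∈ M.faces, pick v ∈ σ1 ⊆ ρ
      have hσ1M : σ1 ∈ M.faces := M.down_closed τ hτ.1 σ1 hst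
      obtain ⟨v, hv⟩ := hσ1K.2
      refine ⟨v, mem_verts_of_mem_face hσ1M hv, ?_⟩
      rw [Set.insert_eq_self.2 (hσρ hv)]
      exact hρK.1

lemma nbhdIter_sd_subset (K M : Cplx V) :
    ∀ r, (nbhdIter (sd K) (sd M) (2 * r)).faces ⊆ (sd (nbhdIter K M r)).faces := by
  intro r
  induction r with
  | zero => exact le_refl _
  | succ r ih =>
    have h2 : 2 * (r + 1) = (2 * r) + 1 + 1 := by ring
    rw [h2]
    show (nbhd (sd K) (nbhd (sd K) (nbhdIter (sd K) (sd M) (2*r)))).faces ⊆ _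
    calc (nbhd (sd K) (nbhd (sd K) (nbhdIter (sd K) (sd M) (2*r)))).faces
        ⊆ (nbhd (sd K) (nbhd (sd K) (sd (nbhdIter K M r)))).faces :=
          nbhd_mono (nbhd_mono ih)
      _ ⊆ (sd (nbhd K (nbhdIter K M r))).faces := nbhd_nbhd_sd_subset K _
      _ = (sd (nbhdIter K M (r+1))).faces := rfl

end Aux
section Aux2

open Set Relation

variable {Γ V : Type*} [Group Γ]

/-- A "good map": an order-preserving, equivariant map on the face poset of `A`,
with values in the faces of `A`, fixing the face poset of `L` pointwise. -/
def GoodMap (Γ : Type*) [Group Γ] {V : Type*} (a : Γ → V → V) (A L : Cplx V)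
    (F : Set V → Set V) : Prop :=
  (∀ σ ∈ facePoset A, F σ ∈ A.faces) ∧
  (∀ σ ∈ facePoset A, (F σ).Nonempty) ∧
  (∀ ⦃σ τ : Set V⦄, σ ∈ facePoset A → τ ∈ facePoset A → σ ⊆ τ → F σ ⊆ F τ) ∧
  (∀ σ ∈ facePoset L, F σ = σ) ∧
  (∀ γ : Γ, ∀ σ ∈ facePoset A, F (a γ '' σ) = a γ '' F σ)

lemma goodMap_image_mem {a : Γ → V → V} {A L : Cplx V} {F : Set V → Set V}
    (hF : GoodMap Γ a A L F) {c : Set (Set V)} (hc : c ∈ (sd A).faces) :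
    F '' c ∈ (sd A).faces := by
  refine ⟨hc.1.image F, ?_, ?_⟩
  · rintro x ⟨σ, hσ, rfl⟩
    exact ⟨hF.1 σ (hc.2.1 σ hσ), hF.2.1 σ (hc.2.1 σ hσ)⟩
  · rintro x ⟨σ, hσ, rfl⟩ y ⟨τ, hτ, rfl⟩ hne
    have hσA := hc.2.1 σ hσ
    have hτA := hc.2.1 τ hτ
    by_cases he : σ = τ
    · exact absurd (congrArg F he) hne
    · rcases hc.2.2 hσ hτ he with hst | hts
      · exact Or.inl (hF.2.2.1 hσA hτA hst)
      · exact Or.inr (hF.2.2.1 hτA hσA hts)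

lemma goodMap_isDef {a : Γ → V → V} {A L : Cplx V} {F : Set V → Set V}
    (hF : GoodMap Γ a A L F) :
    IsDefMultiMap Γ (fun γ (σ : Set V) => a γ '' σ) (sd A) (sd L) (fun σ => {F σ}) := by
  refine ⟨⟨⟨fun σ _ => ⟨F σ, rfl⟩, ?_⟩, ?_⟩, ?_⟩
  · intro c hc
    rw [biUnion_singleton_eq_image]
    exact goodMap_image_mem hF hc
  · intro γ σ hσ
    rw [sd_verts_eq] at hσ
    show ({F (a γ '' σ)} : Set (Set V)) = (fun σ => a γ '' σ) '' {F σ}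
    rw [Set.image_singleton, hF.2.2.2.2 γ σ hσ]
  · intro σ hσ
    rw [sd_verts_eq] at hσ
    show ({F σ} : Set (Set V)) = {σ}
    rw [hF.2.2.2.1 σ hσ]

lemma goodMap_of_isDef {a : Γ → V → V} {A L : Cplx V} {η : V → Set V}
    (hη : IsDefMultiMap Γ a A L η) :
    GoodMap Γ a A L (fun σ => ⋃ v ∈ σ, η v) := by
  obtain ⟨⟨⟨hne, hfaces⟩, hequiv⟩, hfix⟩ := hη
  refine ⟨fun σ hσ => hfaces σ hσ.1, ?_, ?_, ?_, ?_⟩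
  · intro σ hσ
    obtain ⟨v, hv⟩ := hσ.2
    obtain ⟨x, hx⟩ := hne v (mem_verts_of_mem_face hσ.1 hv)
    exact ⟨x, Set.mem_biUnion hv hx⟩
  · intro σ τ _ _ hst
    exact Set.biUnion_mono hst (fun _ _ => subset_rfl)
  · intro σ hσ
    have : ∀ v ∈ σ, η v = {v} := fun v hv => hfix v (mem_verts_of_mem_face hσ.1 hv)
    calc (⋃ v ∈ σ, η v) = ⋃ v ∈ σ, ({v} : Set V) := Set.iUnion₂_congr this
      _ = σ := Set.biUnion_of_singleton σ
  · intro γ σ hσ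
    have hcg : ∀ v ∈ σ, η (a γ v) = a γ '' η v :=
      fun v hv => hequiv γ v (mem_verts_of_mem_face hσ.1 hv)
    show (⋃ v ∈ a γ '' σ, η v) = a γ '' ⋃ v ∈ σ, η v
    calc (⋃ v ∈ a γ '' σ, η v) = ⋃ v ∈ σ, η (a γ v) := Set.biUnion_image
      _ = ⋃ v ∈ σ, a γ '' η v := Set.iUnion₂_congr hcg
      _ = a γ '' ⋃ v ∈ σ, η v := (Set.image_iUnion₂ _ _).symm

end Aux2
section Aux3

open Set Relation

variable {Γ V : Type*} [Group Γ]

lemma rtg_symm {α : Type*} {r : α → α → Prop} (hs : Symmetric r) {x y : α}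
    (h : Relation.ReflTransGen r x y) : Relation.ReflTransGen r y x := by
  induction h with
  | refl => exact .refl
  | tail _ h2 ih => exact Relation.ReflTransGen.head (hs h2) ih

lemma connect_of_le (a : Γ → V → V) (A L : Cplx V)
    (e1 : ∀ v, a 1 v = v) (emul : ∀ γ γ' : Γ, ∀ v, a (γ * γ') v = a γ (a γ' v))
    (hAinv : ∀ γ : Γ, ∀ σ ∈ A.faces, a γ '' σ ∈ A.faces)
    (hFA : (facePoset A).Finite) :
    ∀ n : ℕ, ∀ F G : Set V → Set V, GoodMap Γ a A L F → GoodMap Γ a A L G →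
      (∀ σ ∈ facePoset A, F σ ⊆ G σ) →
      {σ ∈ facePoset A | F σ ≠ G σ}.ncard = n →
      Relation.ReflTransGen (cplxDefStep Γ (fun γ (σ : Set V) => a γ '' σ) (sd A) (sd L))
        (fun σ => {F σ}) (fun σ => {G σ}) := by
  have hinj : ∀ γ : Γ, Function.Injective (a γ) := by
    intro γ x y hxy
    have h := congrArg (a γ⁻¹) hxy
    rwa [← emul, ← emul, inv_mul_cancel, e1, e1] at h
  have ha1img : ∀ s : Set V, a 1 '' s = s := by
    intro s; rw [show a 1 = id from funext e1, Set.image_id]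
  have himgmul : ∀ γ γ' : Γ, ∀ s : Set V, a (γ * γ') '' s = a γ '' (a γ' '' s) := by
    intro γ γ' s
    rw [show a (γ * γ') = a γ ∘ a γ' from funext (emul γ γ'), Set.image_comp]
  have hcancel : ∀ γ : Γ, ∀ s : Set V, a γ '' (a γ⁻¹ '' s) = s := by
    intro γ s
    rw [← himgmul, mul_inv_cancel, ha1img]
  have hcancel' : ∀ γ : Γ, ∀ s : Set V, a γ⁻¹ '' (a γ '' s) = s := by
    intro γ s
    have h := hcancel γ⁻¹ s
    rwa [inv_inv] at h
  intro n
  induction n using Nat.strong_induction_on with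
  | _ n ih =>
  intro F G hF hG hle hcard
  classical
  set D := {σ ∈ facePoset A | F σ ≠ G σ} with hDdef
  have hDfin : D.Finite := hFA.subset (Set.sep_subset _ _)
  rcases Set.eq_empty_or_nonempty D with hDe | hDne
  · have heq : ∀ σ ∈ facePoset A, F σ = G σ := by
      intro σ hσ
      by_contra hne
      exact Set.notMem_empty σ (hDe ▸ (show σ ∈ D from ⟨hσ, hne⟩))
    refine Relation.ReflTransGen.single ⟨goodMap_isDef hF, goodMap_isDef hG, Or.inl ?_⟩
    intro σ hσ
    rw [sd_verts_eq] at hσ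
    show ({F σ} : Set (Set V)) ⊆ {G σ}
    rw [heq σ hσ]
  · obtain ⟨σ0, hσ0D, hσ0max'⟩ := Set.Finite.exists_maximal hDfin hDne
    have hσ0max : ∀ a' ∈ D, id σ0 ≤ id a' → id σ0 = id a' :=
      fun a' h h2 => le_antisymm h2 (hσ0max' h h2)
    simp only [id] at hσ0max
    set O : Set (Set V) := Set.range (fun γ : Γ => a γ '' σ0) with hOdef
    have hDinv : ∀ γ : Γ, ∀ σ, σ ∈ D → a γ '' σ ∈ D := by
      intro γ σ hσ
      refine ⟨⟨hAinv γ σ hσ.1.1, hσ.1.2.image _⟩, ?_⟩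
      rw [hF.2.2.2.2 γ σ hσ.1, hG.2.2.2.2 γ σ hσ.1]
      intro hc
      exact hσ.2 (Set.image_injective.mpr (hinj γ) hc)
    have hOD : O ⊆ D := by
      rintro _ ⟨γ, rfl⟩
      exact hDinv γ σ0 hσ0D
    have hσ0O : σ0 ∈ O := ⟨1, ha1img σ0⟩
    have hOiff : ∀ γ : Γ, ∀ σ : Set V, a γ '' σ ∈ O ↔ σ ∈ O := by
      intro γ σ
      constructor
      · rintro ⟨γ', hγ'⟩
        change a γ' '' σ0 = a γ '' σ at hγ'
        refine ⟨γ⁻¹ * γ', ?_⟩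
        show a (γ⁻¹ * γ') '' σ0 = σ
        rw [himgmul, hγ', hcancel' γ σ]
      · rintro ⟨γ', hγ'⟩
        change a γ' '' σ0 = σ at hγ'
        exact ⟨γ * γ', by show a (γ * γ') '' σ0 = a γ '' σ; rw [himgmul, hγ']⟩
    have hmaxO : ∀ τ ∈ O, ∀ ρ ∈ D, τ ⊆ ρ → τ = ρ := by
      rintro _ ⟨γ, rfl⟩ ρ hρ hsub
      show a γ '' σ0 = ρ
      have h1 : a γ⁻¹ '' ρ ∈ D := hDinv γ⁻¹ ρ hρ
      have h2 : σ0 ⊆ a γ⁻¹ '' ρ := by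
        have h3 := Set.image_mono (f := a γ⁻¹) hsub
        rwa [hcancel' γ σ0] at h3
      rw [hσ0max _ h1 h2, hcancel γ ρ]
    set F' : Set V → Set V := fun σ => if σ ∈ O then G σ else F σ with hF'def
    set μ : Set V → Set (Set V) := fun σ => if σ ∈ O then {F σ, G σ} else {F σ} with hμdef
    have hF'eqO : ∀ σ ∈ O, F' σ = G σ := by intro σ h; simp [hF'def, h]
    have hF'eqnO : ∀ σ, σ ∉ O → F' σ = F σ := by intro σ h; simp [hF'def, h]
    have hμmem : ∀ σ x, x ∈ μ σ ↔ (x = F σ ∨ (σ ∈ O ∧ x = G σ)) := by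
      intro σ x
      by_cases h : σ ∈ O <;> simp [hμdef, h]
    have hFmono := hF.2.2.1
    have hGmono := hG.2.2.1
    have hτnotD : ∀ σ ∈ O, ∀ τ ∈ facePoset A, σ ⊆ τ → σ ≠ τ → F τ = G τ := by
      intro σ hσO τ hτ hsub hne
      by_contra hFG
      exact hne (hmaxO σ hσO τ ⟨hτ, hFG⟩ hsub)
    have hcomp : ∀ σ τ, σ ∈ facePoset A → τ ∈ facePoset A → σ ⊆ τ →
        ∀ x ∈ μ σ, ∀ y ∈ μ τ, x ⊆ y ∨ y ⊆ x := by
      intro σ τ hσ hτ hsub x hx y hy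
      rcases (hμmem σ x).1 hx with rfl | ⟨hσO, rfl⟩
      · rcases (hμmem τ y).1 hy with rfl | ⟨hτO, rfl⟩
        · exact Or.inl (hFmono hσ hτ hsub)
        · exact Or.inl ((hFmono hσ hτ hsub).trans (hle τ hτ))
      · rcases (hμmem τ y).1 hy with rfl | ⟨hτO, rfl⟩
        · by_cases he : σ = τ
          · subst he; exact Or.inr (hle σ hσ)
          · rw [hτnotD σ hσO τ hτ hsub he]
            exact Or.inl (hGmono hσ hτ hsub)
        · exact Or.inl (hGmono hσ hτ hsub)
    have hμfin : ∀ σ, (μ σ).Finite := by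
      intro σ
      by_cases h : σ ∈ O <;> simp [hμdef, h]
    have hμsubFA : ∀ σ ∈ facePoset A, ∀ x ∈ μ σ, x ∈ facePoset A := by
      intro σ hσ x hx
      rcases (hμmem σ x).1 hx with rfl | ⟨_, rfl⟩
      · exact ⟨hF.1 σ hσ, hF.2.1 σ hσ⟩
      · exact ⟨hG.1 σ hσ, hG.2.1 σ hσ⟩
    have hμfaces : ∀ c ∈ (sd A).faces, (⋃ σ ∈ c, μ σ) ∈ (sd A).faces := by
      intro c hc
      refine ⟨hc.1.biUnion (fun σ _ => hμfin σ), ?_, ?_⟩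
      · intro x hx
        rw [Set.mem_iUnion₂] at hx
        obtain ⟨σ, hσ, hxμ⟩ := hx
        exact hμsubFA σ (hc.2.1 σ hσ) x hxμ
      · intro x hx y hy hne
        rw [Set.mem_iUnion₂] at hx hy
        obtain ⟨σ, hσ, hxμ⟩ := hx
        obtain ⟨τ, hτ, hyμ⟩ := hy
        by_cases he : σ = τ
        · subst he
          exact hcomp σ σ (hc.2.1 σ hσ) (hc.2.1 σ hσ) subset_rfl x hxμ y hyμ
        · rcases hc.2.2 hσ hτ he with hst | hts
          · exact hcomp σ τ (hc.2.1 σ hσ) (hc.2.1 τ hτ) hst x hxμ y hyμ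
          · exact (hcomp τ σ (hc.2.1 τ hτ) (hc.2.1 σ hσ) hts y hyμ x hxμ).symm
    have hμdefmm : IsDefMultiMap Γ (fun γ (σ : Set V) => a γ '' σ) (sd A) (sd L) μ := by
      refine ⟨⟨⟨fun σ _ => ⟨F σ, (hμmem σ (F σ)).2 (Or.inl rfl)⟩, hμfaces⟩, ?_⟩, ?_⟩
      · intro γ σ hσ
        rw [sd_verts_eq] at hσ
        show μ (a γ '' σ) = (fun s => a γ '' s) '' μ σ
        by_cases h : σ ∈ O
        · have h2 : a γ '' σ ∈ O := (hOiff γ σ).2 h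
          simp only [hμdef, if_pos h, if_pos h2]
          rw [Set.image_insert_eq, Set.image_singleton, hF.2.2.2.2 γ σ hσ, hG.2.2.2.2 γ σ hσ]
        · have h2 : a γ '' σ ∉ O := fun hc => h ((hOiff γ σ).1 hc)
          simp only [hμdef, if_neg h, if_neg h2]
          rw [Set.image_singleton, hF.2.2.2.2 γ σ hσ]
      · intro σ hσ
        rw [sd_verts_eq] at hσ
        have hnotO : σ ∉ O := fun hc =>
          (hOD hc).2 (by rw [hF.2.2.2.1 σ hσ, hG.2.2.2.1 σ hσ])
        show μ σ = {σ}
        simp only [hμdef, if_neg hnotO, hF.2.2.2.1 σ hσ]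
    have hF' : GoodMap Γ a A L F' := by
      refine ⟨?_, ?_, ?_, ?_, ?_⟩
      · intro σ hσ
        by_cases h : σ ∈ O
        · rw [hF'eqO σ h]; exact hG.1 σ hσ
        · rw [hF'eqnO σ h]; exact hF.1 σ hσ
      · intro σ hσ
        by_cases h : σ ∈ O
        · rw [hF'eqO σ h]; exact hG.2.1 σ hσ
        · rw [hF'eqnO σ h]; exact hF.2.1 σ hσ
      · intro σ τ hσ hτ hsub
        by_cases hσO : σ ∈ O <;> by_cases hτO : τ ∈ O
        · rw [hF'eqO σ hσO, hF'eqO τ hτO]; exact hGmono hσ hτ hsub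
        · rw [hF'eqO σ hσO, hF'eqnO τ hτO]
          by_cases he : σ = τ
          · exact absurd (he ▸ hσO) hτO
          · rw [hτnotD σ hσO τ hτ hsub he]; exact hGmono hσ hτ hsub
        · rw [hF'eqnO σ hσO, hF'eqO τ hτO]
          exact (hFmono hσ hτ hsub).trans (hle τ hτ)
        · rw [hF'eqnO σ hσO, hF'eqnO τ hτO]; exact hFmono hσ hτ hsub
      · intro σ hσ
        have hnotO : σ ∉ O := fun hc =>
          (hOD hc).2 (by rw [hF.2.2.2.1 σ hσ, hG.2.2.2.1 σ hσ])
        rw [hF'eqnO σ hnotO]; exact hF.2.2.2.1 σ hσ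
      · intro γ σ hσ
        by_cases h : σ ∈ O
        · rw [hF'eqO σ h, hF'eqO _ ((hOiff γ σ).2 h)]; exact hG.2.2.2.2 γ σ hσ
        · rw [hF'eqnO σ h, hF'eqnO _ (fun hc => h ((hOiff γ σ).1 hc))]
          exact hF.2.2.2.2 γ σ hσ
    have hle' : ∀ σ ∈ facePoset A, F' σ ⊆ G σ := by
      intro σ hσ
      by_cases h : σ ∈ O
      · rw [hF'eqO σ h]
      · rw [hF'eqnO σ h]; exact hle σ hσ
    have hD'sub : {σ ∈ facePoset A | F' σ ≠ G σ} ⊆ D := by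
      rintro σ ⟨hσ, hne⟩
      refine ⟨hσ, ?_⟩
      by_cases h : σ ∈ O
      · exact absurd (hF'eqO σ h) hne
      · rw [hF'eqnO σ h] at hne; exact hne
    have hσ0notD' : σ0 ∉ {σ ∈ facePoset A | F' σ ≠ G σ} := fun hc => hc.2 (hF'eqO σ0 hσ0O)
    have hss : {σ ∈ facePoset A | F' σ ≠ G σ} ⊂ D :=
      (Set.ssubset_iff_of_subset hD'sub).2 ⟨σ0, hσ0D, hσ0notD'⟩
    have hlt : {σ ∈ facePoset A | F' σ ≠ G σ}.ncard < n :=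
      hcard ▸ Set.ncard_lt_ncard hss hDfin
    have step1 : cplxDefStep Γ (fun γ (σ : Set V) => a γ '' σ) (sd A) (sd L)
        (fun σ => {F σ}) μ :=
      ⟨goodMap_isDef hF, hμdefmm,
        Or.inl (fun σ _ => Set.singleton_subset_iff.2 ((hμmem σ (F σ)).2 (Or.inl rfl)))⟩
    have step2 : cplxDefStep Γ (fun γ (σ : Set V) => a γ '' σ) (sd A) (sd L)
        μ (fun σ => {F' σ}) := by
      refine ⟨hμdefmm, goodMap_isDef hF', Or.inr ?_⟩
      intro σ _
      refine Set.singleton_subset_iff.2 ((hμmem σ (F' σ)).2 ?_)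
      by_cases h : σ ∈ O
      · exact Or.inr ⟨h, hF'eqO σ h⟩
      · exact Or.inl (hF'eqnO σ h)
    exact (Relation.ReflTransGen.single step1).trans
      ((Relation.ReflTransGen.single step2).trans (ih _ hlt F' G hF' hG hle' rfl))

end Aux3
lemma zigzag_transport {Γ V : Type*} [Group Γ] (a : Γ → V → V) (A L : Cplx V)
    (e1 : ∀ v, a 1 v = v) (emul : ∀ γ γ' : Γ, ∀ v, a (γ * γ') v = a γ (a γ' v))
    (hAinv : ∀ γ : Γ, ∀ σ ∈ A.faces, a γ '' σ ∈ A.faces)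
    (hFA : (facePoset A).Finite) {η ζ : V → Set V}
    (h : Relation.ReflTransGen (cplxDefStep Γ a A L) η ζ) :
    Relation.ReflTransGen (cplxDefStep Γ (fun γ (σ : Set V) => a γ '' σ) (sd A) (sd L))
      (fun σ => {⋃ v ∈ σ, η v}) (fun σ => {⋃ v ∈ σ, ζ v}) := by
  induction h with
  | refl => exact .refl
  | tail h1 h2 ih =>
    obtain ⟨hb, hc, hbc⟩ := h2
    have hgb := goodMap_of_isDef hb
    have hgc := goodMap_of_isDef hc
    refine ih.trans ?_
    rcases hbc with hlbc | hlcb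
    · refine connect_of_le a A L e1 emul hAinv hFA _ _ _ hgb hgc ?_ rfl
      intro σ hσ
      exact Set.iUnion₂_mono (fun v hv => hlbc v (mem_verts_of_mem_face hσ.1 hv))
    · refine rtg_symm (fun x y hxy => ⟨hxy.2.1, hxy.1, hxy.2.2.symm⟩)
        (connect_of_le a A L e1 emul hAinv hFA _ _ _ hgc hgb ?_ rfl)
      intro σ hσ
      exact Set.iUnion₂_mono (fun v hv => hlcb v (mem_verts_of_mem_face hσ.1 hv))
/-- Let Γ be a finite group.  If (K,L) is an r-NDR pair of finite Γ-simplicial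
complexes, then (Sd(K), Sd(L)) is a (2r)-NDR pair. -/
theorem sd_isNDRPair_of_isNDRPair {Γ V : Type*} [Group Γ] [Finite Γ]
    (a : Γ → V → V) (K L : Cplx V) (ha : IsCplxAction Γ a K)
    (haL : ∀ γ : Γ, ∀ σ ∈ L.faces, (a γ) '' σ ∈ L.faces)
    (hfin : K.verts.Finite) (hLK : L.faces ⊆ K.faces)
    (r : ℕ) (hr : 1 ≤ r) (h : IsNDRPair Γ a K L r) :
    IsNDRPair Γ (fun γ (σ : Set V) => (a γ) '' σ) (sd K) (sd L) (2 * r) := by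
  obtain ⟨A, hAK, hLA, hAinv, hνA, f, hfdef, hfzig, hfim⟩ := h
  obtain ⟨e1, emul, hKinv⟩ := ha
  have hFA : (facePoset A).Finite := by
    refine hfin.finite_subsets.subset ?_
    intro σ hσ
    exact fun x hx => verts_mono hAK (mem_verts_of_mem_face hσ.1 hx)
  have hgoodf : GoodMap Γ a A L (fun σ => f '' σ) := by
    have hg := goodMap_of_isDef hfdef
    have heq : (fun σ : Set V => ⋃ v ∈ σ, ({f v} : Set V)) = fun σ => f '' σ := by
      funext σ; exact biUnion_singleton_eq_image f σ
    rwa [heq] at hg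
  refine ⟨sd A, sd_mono hAK, sd_mono hLA, ?_, ?_, fun σ => f '' σ, ?_, ?_, ?_⟩
  · -- equivariance of sd A
    intro γ c hc
    refine ⟨hc.1.image _, ?_, ?_⟩
    · rintro _ ⟨σ, hσ, rfl⟩
      exact ⟨hAinv γ σ (hc.2.1 σ hσ).1, (hc.2.1 σ hσ).2.image _⟩
    · rintro _ ⟨σ, hσ, rfl⟩ _ ⟨τ, hτ, rfl⟩ hne
      by_cases he : σ = τ
      · exact absurd (congrArg _ he) hne
      · rcases hc.2.2 hσ hτ he with h1 | h1
        · exact Or.inl (Set.image_mono h1)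
        · exact Or.inr (Set.image_mono h1)
  · -- neighborhoods
    exact Set.Subset.trans (nbhdIter_sd_subset K L r) (sd_mono hνA)
  · -- the retraction is a Def multimap
    exact goodMap_isDef hgoodf
  · -- zigzag to the identity
    have ht := zigzag_transport a A L e1 emul hAinv hFA hfzig
    have h1 : (fun σ : Set V => ({⋃ v ∈ σ, ({v} : Set V)} : Set (Set V))) =
        fun σ => {σ} := by
      funext σ; rw [Set.biUnion_of_singleton]
    have h2 : (fun σ : Set V => ({⋃ v ∈ σ, ({f v} : Set V)} : Set (Set V))) =
        fun σ => {f '' σ} := by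
      funext σ; rw [biUnion_singleton_eq_image]
    rw [h1, h2] at ht
    exact ht
  · -- image contained in sd L
    intro c hc
    refine ⟨hc.1.image _, ?_, ?_⟩
    · rintro _ ⟨σ, hσ, rfl⟩
      have hσA := hc.2.1 σ hσ
      exact ⟨hfim σ hσA.1, hσA.2.image f⟩
    · rintro _ ⟨σ, hσ, rfl⟩ _ ⟨τ, hτ, rfl⟩ hne
      by_cases he : σ = τ
      · exact absurd (congrArg _ he) hne
      · rcases hc.2.2 hσ hτ he with h1 | h1
        · exact Or.inl (Set.image_mono h1)
        · exact Or.inr (Set.image_mono h1)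
end

section
/- Let Γ be a finite group, K a finite Γ-simplicial complex and L a Γ-subcomplex of K. Then (Sd²(K), Sd²(L)) is a 1-NDR pair. -/
namespace SdSqAux

variable {Γ V : Type*} [Group Γ]

/-- The homotopy stage maps: intersect with `facePoset L` once the chain is small. -/
noncomputable def hmap (L : Cplx V) (t : ℕ) (c : Set (Set V)) : Set (Set V) :=
  if c.ncard < t then c ∩ facePoset L else c

/-- Vertices of the ambient subcomplex `A`: chains of `FK` meeting `FL`. -/
def XA (K L : Cplx V) : Set (Set (Set V)) :=
  {c | c ∈ facePoset (sd K) ∧ (c ∩ facePoset L).Nonempty}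

/-- The subcomplex `A` of `Sd²K`. -/
def Acplx (K L : Cplx V) : Cplx (Set (Set V)) where
  faces := {C | C.Finite ∧ (∀ c ∈ C, c ∈ XA K L) ∧ IsChain (· ⊆ ·) C}
  finite_mem := fun _ h => h.1
  down_closed := fun C hC D hD =>
    ⟨hC.1.subset hD, fun c hc => hC.2.1 c (hD hc), by exact hC.2.2.mono hD⟩

lemma mem_sd_verts {M : Cplx (Set V)} {v : Set (Set V)} :
    v ∈ (sd M).verts ↔ v ∈ facePoset M := by
  constructor
  · intro h; exact h.2.1 v rfl
  · intro h
    exact ⟨Set.finite_singleton v, fun σ hσ => by rwa [Set.mem_singleton_iff.mp hσ],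
      Set.subsingleton_singleton.isChain⟩

lemma Acplx_verts {K L : Cplx V} {c : Set (Set V)} :
    c ∈ (Acplx K L).verts ↔ c ∈ XA K L := by
  constructor
  · intro h; exact h.2.1 c rfl
  · intro h
    exact ⟨Set.finite_singleton c, fun x hx => by rwa [Set.mem_singleton_iff.mp hx],
      Set.subsingleton_singleton.isChain⟩

lemma fp_mono {K L : Cplx V} (hLK : L.faces ⊆ K.faces) : facePoset L ⊆ facePoset K :=
  fun σ h => ⟨hLK h.1, h.2⟩

lemma sd_mono {K L : Cplx V} (hLK : L.faces ⊆ K.faces) : (sd L).faces ⊆ (sd K).faces :=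
  fun c hc => ⟨hc.1, fun σ hσ => fp_mono hLK (hc.2.1 σ hσ), hc.2.2⟩

lemma inter_eq_of_fpsdL {L : Cplx V} {c : Set (Set V)} (hc : c ∈ (sd L).faces) :
    c ∩ facePoset L = c :=
  Set.inter_eq_self_of_subset_left (fun σ hσ => hc.2.1 σ hσ)

lemma mem_XA_of_fpsdL {K L : Cplx V} (hLK : L.faces ⊆ K.faces) {c : Set (Set V)}
    (hc : c ∈ facePoset (sd L)) : c ∈ XA K L :=
  ⟨⟨sd_mono hLK hc.1, hc.2⟩, by rw [inter_eq_of_fpsdL hc.1]; exact hc.2⟩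

section action

variable {a : Γ → V → V} {K L : Cplx V}

lemma a_inv_comp (ha : IsCplxAction Γ a K) (γ : Γ) (v : V) : a γ⁻¹ (a γ v) = v := by
  rw [← ha.2.1, inv_mul_cancel, ha.1]

lemma img_inv (ha : IsCplxAction Γ a K) (γ : Γ) (σ : Set V) : a γ⁻¹ '' (a γ '' σ) = σ := by
  rw [← Set.image_comp]
  have : (a γ⁻¹ ∘ a γ) = id := funext fun v => a_inv_comp ha γ v
  rw [this, Set.image_id]

lemma img_injective (ha : IsCplxAction Γ a K) (γ : Γ) :
    Function.Injective (Set.image (a γ)) := by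
  intro σ τ h
  rw [← img_inv ha γ σ, h, img_inv ha γ τ]

lemma interQ (ha : IsCplxAction Γ a K)
    (haL : ∀ γ : Γ, ∀ σ ∈ L.faces, (a γ) '' σ ∈ L.faces) (γ : Γ) (c : Set (Set V)) :
    ((fun σ => a γ '' σ) '' c) ∩ facePoset L = (fun σ => a γ '' σ) '' (c ∩ facePoset L) := by
  ext τ
  constructor
  · rintro ⟨⟨σ, hσc, rfl⟩, hτL, hτne⟩
    refine ⟨σ, ⟨hσc, ?_, Set.image_nonempty.mp hτne⟩, rfl⟩
    have h2 := haL γ⁻¹ _ hτL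
    rwa [img_inv ha γ σ] at h2
  · rintro ⟨σ, ⟨hσc, hσL, hσne⟩, rfl⟩
    exact ⟨⟨σ, hσc, rfl⟩, haL γ σ hσL, hσne.image _⟩

lemma hmap_equiv (ha : IsCplxAction Γ a K)
    (haL : ∀ γ : Γ, ∀ σ ∈ L.faces, (a γ) '' σ ∈ L.faces) (γ : Γ) (t : ℕ) (c : Set (Set V)) :
    hmap L t ((fun σ => a γ '' σ) '' c) = (fun σ => a γ '' σ) '' (hmap L t c) := by
  unfold hmap
  rw [Set.ncard_image_of_injective c (img_injective ha γ)]
  split_ifs with h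
  · exact interQ ha haL γ c
  · rfl

lemma XA_invariant (ha : IsCplxAction Γ a K)
    (haL : ∀ γ : Γ, ∀ σ ∈ L.faces, (a γ) '' σ ∈ L.faces) (γ : Γ) {c : Set (Set V)}
    (hc : c ∈ XA K L) : (fun σ => a γ '' σ) '' c ∈ XA K L := by
  refine ⟨⟨⟨hc.1.1.1.image _, ?_, ?_⟩, hc.1.2.image _⟩, ?_⟩
  · rintro τ ⟨σ, hσc, rfl⟩
    have hσ := hc.1.1.2.1 σ hσc
    exact ⟨ha.2.2 γ σ hσ.1, hσ.2.image _⟩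
  · rintro x ⟨σ, hσc, rfl⟩ y ⟨τ, hτc, rfl⟩ hne
    have hστ : σ ≠ τ := fun h => hne (by rw [h])
    rcases hc.1.1.2.2 hσc hτc hστ with h | h
    · exact Or.inl (Set.image_mono h)
    · exact Or.inr (Set.image_mono h)
  · rw [interQ ha haL γ c]
    exact hc.2.image _

end action

lemma fp_finite {K : Cplx V} (hfin : K.verts.Finite) : (facePoset K).Finite := by
  apply hfin.finite_subsets.subset
  intro σ hσ v hv
  exact K.down_closed σ hσ.1 {v} (Set.singleton_subset_iff.mpr hv)

lemma chain_sub_fp {K : Cplx V} {c : Set (Set V)} (hc : c ∈ (sd K).faces) :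
    c ⊆ facePoset K := fun σ hσ => hc.2.1 σ hσ

lemma hmap_fix {L : Cplx V} {c : Set (Set V)} (hc : c ∈ facePoset (sd L)) (t : ℕ) :
    hmap L t c = c := by
  have h := inter_eq_of_fpsdL hc.1
  unfold hmap
  split_ifs <;> simp [h]

lemma hmap_mem_XA {K L : Cplx V} (hLK : L.faces ⊆ K.faces) {c : Set (Set V)}
    (hc : c ∈ XA K L) (t : ℕ) : hmap L t c ∈ XA K L := by
  unfold hmap
  split_ifs with h
  · refine ⟨⟨⟨hc.1.1.1.subset Set.inter_subset_left, fun σ hσ => fp_mono hLK hσ.2,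
      hc.1.1.2.2.mono Set.inter_subset_left⟩, hc.2⟩, ?_⟩
    rw [Set.inter_assoc, Set.inter_self]
    exact hc.2
  · exact hc

lemma hmap_pair_aux {K L : Cplx V} {c c' : Set (Set V)} (hc : c ∈ XA K L) (hc' : c' ∈ XA K L)
    (hsub : c ⊆ c') {s s' t : ℕ} (hs : t ≤ s ∧ s ≤ t + 1) (hs' : t ≤ s' ∧ s' ≤ t + 1) :
    hmap L s c ⊆ hmap L s' c' ∨ hmap L s' c' ⊆ hmap L s c := by
  unfold hmap
  split_ifs with h1 h2 h2
  · exact Or.inl (Set.inter_subset_inter_left _ hsub)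
  · exact Or.inl (Set.inter_subset_left.trans hsub)
  · by_cases he : c = c'
    · subst he; exact Or.inr Set.inter_subset_left
    · exfalso
      have hlt : c.ncard < c'.ncard :=
        Set.ncard_lt_ncard (ssubset_of_subset_of_ne hsub he) hc'.1.1.1
      omega
  · exact Or.inl hsub

lemma hmap_pair {K L : Cplx V} {c c' : Set (Set V)} (hc : c ∈ XA K L) (hc' : c' ∈ XA K L)
    (hcc : c ⊆ c' ∨ c' ⊆ c) {s s' t : ℕ} (hs : t ≤ s ∧ s ≤ t + 1) (hs' : t ≤ s' ∧ s' ≤ t + 1) :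
    hmap L s c ⊆ hmap L s' c' ∨ hmap L s' c' ⊆ hmap L s c := by
  rcases hcc with h | h
  · exact hmap_pair_aux hc hc' h hs hs'
  · exact (hmap_pair_aux hc' hc h hs' hs).symm

lemma image_face {K L : Cplx V} (hLK : L.faces ⊆ K.faces) {C : Set (Set (Set V))}
    (hC : C ∈ (Acplx K L).faces) (t : ℕ) {s : ℕ} (hs : t ≤ s ∧ s ≤ t + 1) :
    hmap L s '' C ∈ (Acplx K L).faces := by
  refine ⟨hC.1.image _, ?_, ?_⟩
  · rintro x ⟨c, hc, rfl⟩
    exact hmap_mem_XA hLK (hC.2.1 c hc) s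
  · rintro x ⟨c, hc, rfl⟩ y ⟨c', hc', rfl⟩ hne
    have hcc : c ⊆ c' ∨ c' ⊆ c := by
      by_cases he : c = c'
      · exact Or.inl (by rw [he])
      · exact hC.2.2 hc hc' he
    exact hmap_pair (hC.2.1 c hc) (hC.2.1 c' hc') hcc hs hs

lemma union_face {K L : Cplx V} (hLK : L.faces ⊆ K.faces) {C : Set (Set (Set V))}
    (hC : C ∈ (Acplx K L).faces) (t : ℕ) :
    (⋃ c ∈ C, ({hmap L t c, hmap L (t + 1) c} : Set (Set (Set V)))) ∈ (Acplx K L).faces := by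
  have he : (⋃ c ∈ C, ({hmap L t c, hmap L (t + 1) c} : Set (Set (Set V))))
      = hmap L t '' C ∪ hmap L (t + 1) '' C := by
    ext x
    simp only [Set.mem_iUnion, Set.mem_insert_iff, Set.mem_singleton_iff, Set.mem_union,
      Set.mem_image]
    constructor
    · rintro ⟨c, hc, h | h⟩
      · exact Or.inl ⟨c, hc, h.symm⟩
      · exact Or.inr ⟨c, hc, h.symm⟩
    · rintro (⟨c, hc, h⟩ | ⟨c, hc, h⟩)
      · exact ⟨c, hc, Or.inl h.symm⟩
      · exact ⟨c, hc, Or.inr h.symm⟩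
  rw [he]
  refine ⟨(hC.1.image _).union (hC.1.image _), ?_, ?_⟩
  · rintro x (⟨c, hc, rfl⟩ | ⟨c, hc, rfl⟩) <;> exact hmap_mem_XA hLK (hC.2.1 c hc) _
  · have hb1 : t ≤ t ∧ t ≤ t + 1 := ⟨le_rfl, Nat.le_succ t⟩
    have hb2 : t ≤ t + 1 ∧ t + 1 ≤ t + 1 := ⟨Nat.le_succ t, le_rfl⟩
    rintro x (⟨c, hc, rfl⟩ | ⟨c, hc, rfl⟩) y (⟨c', hc', rfl⟩ | ⟨c', hc', rfl⟩) hne <;>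
    · have hcc : c ⊆ c' ∨ c' ⊆ c := by
        by_cases he : c = c'
        · exact Or.inl (by rw [he])
        · exact hC.2.2 hc hc' he
      first
        | exact hmap_pair (hC.2.1 c hc) (hC.2.1 c' hc') hcc hb1 hb1
        | exact hmap_pair (hC.2.1 c hc) (hC.2.1 c' hc') hcc hb1 hb2
        | exact hmap_pair (hC.2.1 c hc) (hC.2.1 c' hc') hcc hb2 hb1
        | exact hmap_pair (hC.2.1 c hc) (hC.2.1 c' hc') hcc hb2 hb2

lemma biUnion_singleton_image {α β : Type*} (f : α → β) (C : Set α) :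
    (⋃ c ∈ C, ({f c} : Set β)) = f '' C := by
  ext x
  simp only [Set.mem_iUnion, Set.mem_singleton_iff, Set.mem_image]
  constructor
  · rintro ⟨c, hc, h⟩; exact ⟨c, hc, h.symm⟩
  · rintro ⟨c, hc, h⟩; exact ⟨c, hc, h.symm⟩

section main

variable (a : Γ → V → V) (K L : Cplx V)

lemma hmap_isDef (ha : IsCplxAction Γ a K)
    (haL : ∀ γ : Γ, ∀ σ ∈ L.faces, (a γ) '' σ ∈ L.faces) (hLK : L.faces ⊆ K.faces)
    (t : ℕ) {s : ℕ} (hs : t ≤ s ∧ s ≤ t + 1) :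
    IsDefMultiMap Γ (fun γ (c : Set (Set V)) => (fun σ => (a γ) '' σ) '' c)
      (Acplx K L) (sd (sd L)) (fun c => {hmap L s c}) := by
  refine ⟨⟨⟨fun v _ => ⟨_, rfl⟩, fun C hC => ?_⟩, fun γ v _ => ?_⟩, fun v hv => ?_⟩
  · rw [biUnion_singleton_image]
    exact image_face hLK hC t hs
  · dsimp only
    rw [Set.image_singleton, hmap_equiv ha haL γ s v]
  · dsimp only
    rw [hmap_fix (mem_sd_verts.mp hv) s]

lemma eta_isDef (ha : IsCplxAction Γ a K)
    (haL : ∀ γ : Γ, ∀ σ ∈ L.faces, (a γ) '' σ ∈ L.faces) (hLK : L.faces ⊆ K.faces)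
    (t : ℕ) :
    IsDefMultiMap Γ (fun γ (c : Set (Set V)) => (fun σ => (a γ) '' σ) '' c)
      (Acplx K L) (sd (sd L)) (fun c => {hmap L t c, hmap L (t + 1) c}) := by
  refine ⟨⟨⟨fun v _ => ⟨_, Set.mem_insert _ _⟩, fun C hC => union_face hLK hC t⟩,
    fun γ v _ => ?_⟩, fun v hv => ?_⟩
  · dsimp only
    rw [Set.image_pair, hmap_equiv ha haL γ t v, hmap_equiv ha haL γ (t + 1) v]
  · dsimp only
    rw [hmap_fix (mem_sd_verts.mp hv) t, hmap_fix (mem_sd_verts.mp hv) (t + 1)]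
    simp

lemma zigzag (ha : IsCplxAction Γ a K)
    (haL : ∀ γ : Γ, ∀ σ ∈ L.faces, (a γ) '' σ ∈ L.faces) (hLK : L.faces ⊆ K.faces) (t : ℕ) :
    Relation.ReflTransGen
      (cplxDefStep Γ (fun γ (c : Set (Set V)) => (fun σ => (a γ) '' σ) '' c)
        (Acplx K L) (sd (sd L)))
      (fun v => {hmap L 0 v}) (fun v => {hmap L t v}) := by
  induction t with
  | zero => exact Relation.ReflTransGen.refl
  | succ t ih =>
    have s1 : cplxDefStep Γ (fun γ (c : Set (Set V)) => (fun σ => (a γ) '' σ) '' c)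
        (Acplx K L) (sd (sd L)) (fun v => {hmap L t v})
        (fun v => {hmap L t v, hmap L (t + 1) v}) :=
      ⟨hmap_isDef a K L ha haL hLK t ⟨le_rfl, Nat.le_succ t⟩,
        eta_isDef a K L ha haL hLK t,
        Or.inl (fun v _ => Set.singleton_subset_iff.mpr (Set.mem_insert _ _))⟩
    have s2 : cplxDefStep Γ (fun γ (c : Set (Set V)) => (fun σ => (a γ) '' σ) '' c)
        (Acplx K L) (sd (sd L)) (fun v => {hmap L t v, hmap L (t + 1) v})
        (fun v => {hmap L (t + 1) v}) :=
      ⟨eta_isDef a K L ha haL hLK t,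
        hmap_isDef a K L ha haL hLK t ⟨Nat.le_succ t, le_rfl⟩,
        Or.inr (fun v _ => Set.singleton_subset_iff.mpr (Set.mem_insert_iff.mpr (Or.inr rfl)))⟩
    exact (ih.tail s1).tail s2

end main

end SdSqAux

/-- Let Γ be a finite group, K a finite Γ-simplicial complex and L a
Γ-subcomplex of K.  Then (Sd²(K), Sd²(L)) is a 1-NDR pair. -/
theorem sd_sq_isNDRPair {Γ V : Type*} [Group Γ] [Finite Γ]
    (a : Γ → V → V) (K L : Cplx V) (ha : IsCplxAction Γ a K)
    (haL : ∀ γ : Γ, ∀ σ ∈ L.faces, (a γ) '' σ ∈ L.faces)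
    (hfin : K.verts.Finite) (hLK : L.faces ⊆ K.faces) :
    IsNDRPair Γ (fun γ (c : Set (Set V)) => (fun σ => (a γ) '' σ) '' c)
      (sd (sd K)) (sd (sd L)) 1 := by
  open SdSqAux in
  refine ⟨Acplx K L, ?_, ?_, ?_, ?_, ?_⟩
  · -- A ⊆ Sd² K
    intro C hC
    exact ⟨hC.1, fun c hc => (hC.2.1 c hc).1, hC.2.2⟩
  · -- Sd² L ⊆ A
    intro C hC
    exact ⟨hC.1, fun c hc => mem_XA_of_fpsdL hLK (hC.2.1 c hc), hC.2.2⟩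
  · -- Γ-invariance
    intro γ C hC
    refine ⟨hC.1.image _, ?_, ?_⟩
    · rintro x ⟨c, hc, rfl⟩
      exact XA_invariant ha haL γ (hC.2.1 c hc)
    · rintro x ⟨c, hc, rfl⟩ y ⟨c', hc', rfl⟩ hne
      have hcc : c ≠ c' := fun h => hne (by rw [h])
      rcases hC.2.2 hc hc' hcc with h | h
      · exact Or.inl (Set.image_mono h)
      · exact Or.inr (Set.image_mono h)
  · -- neighborhood containment
    intro C hC
    obtain ⟨d, hd, hins⟩ := hC
    have hd' : d ∈ facePoset (sd L) := mem_sd_verts.mp hd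
    have hdQ : d ⊆ facePoset L := fun σ hσ => hd'.1.2.1 σ hσ
    refine ⟨hins.1.subset (Set.subset_insert _ _), ?_, hins.2.2.mono (Set.subset_insert _ _)⟩
    intro c hc
    have hcK : c ∈ facePoset (sd K) := hins.2.1 c (Set.mem_insert_of_mem _ hc)
    refine ⟨hcK, ?_⟩
    by_cases hcd : c = d
    · subst hcd
      rw [Set.inter_eq_self_of_subset_left hdQ]
      exact hd'.2
    · rcases hins.2.2 (Set.mem_insert_of_mem _ hc) (Set.mem_insert _ _) hcd with h | h
      · rw [Set.inter_eq_self_of_subset_left (h.trans hdQ)]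
        exact hcK.2
      · obtain ⟨σ, hσ⟩ := hd'.2
        exact ⟨σ, h hσ, hdQ hσ⟩
  · -- collapse
    set n : ℕ := (facePoset K).ncard with hn
    have hlast : ∀ c ∈ XA K L, hmap L (n + 1) c = c ∩ facePoset L := by
      intro c hc
      have hsub : c ⊆ facePoset K := chain_sub_fp hc.1.1
      have hle : c.ncard ≤ n := Set.ncard_le_ncard hsub (fp_finite hfin)
      unfold hmap
      rw [if_pos (Nat.lt_succ_of_le hle)]
    refine ⟨hmap L (n + 1), hmap_isDef a K L ha haL hLK n ⟨Nat.le_succ n, le_rfl⟩, ?_, ?_⟩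
    · have h0 : (fun v : Set (Set V) => ({v} : Set (Set (Set V))))
          = fun v => {hmap L 0 v} := by
        funext v
        simp [hmap]
      rw [h0]
      exact zigzag a K L ha haL hLK (n + 1)
    · intro C hC
      refine ⟨hC.1.image _, ?_, ?_⟩
      · rintro x ⟨c, hc, rfl⟩
        have hcXA := hC.2.1 c hc
        rw [hlast c hcXA]
        refine ⟨⟨hcXA.1.1.1.subset Set.inter_subset_left, fun σ hσ => hσ.2,
          hcXA.1.1.2.2.mono Set.inter_subset_left⟩, hcXA.2⟩
      · rintro x ⟨c, hc, rfl⟩ y ⟨c', hc', rfl⟩ hne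
        rw [hlast c (hC.2.1 c hc), hlast c' (hC.2.1 c' hc')]
        have hcc : c ⊆ c' ∨ c' ⊆ c := by
          by_cases he : c = c'
          · exact Or.inl (by rw [he])
          · exact hC.2.2 hc hc' he
        rcases hcc with h | h
        · exact Or.inl (Set.inter_subset_inter_left _ h)
        · exact Or.inr (Set.inter_subset_inter_left _ h)
end

section
/- Let Γ be a finite group, T a right Γ-graph, and (K,L) a pair of Γ-simplicial complexes (L a Γ-subcomplex of K). Then for every integer r ≥ 1, the r-neighborhood ν^r_{A_T(K)}(A_T(L)) is contained in A_T(ν^r_K(L)), both regarded as subgraphs of A_T(K). -/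
/-- A graph: a symmetric (loops allowed) adjacency relation on the vertex type `V`. -/
structure LGraph (V : Type*) where
  Adj : V → V → Prop
  symm : ∀ v w, Adj v w → Adj w v

/-- A graph homomorphism from `G` to `H`. -/
def IsGraphHom {V W : Type*} (G : LGraph V) (H : LGraph W) (f : V → W) : Prop :=
  ∀ v w, G.Adj v w → H.Adj (f v) (f w)

/-- A multi-homomorphism from `G` to `H`: it assigns to each vertex of `G` a nonempty set of
vertices of `H` so that adjacent vertices have completely adjacent images.  The
multi-homomorphisms, ordered pointwise by inclusion, form the Hom complex `Hom(G, H)`. -/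
def IsMultiHom {V W : Type*} (G : LGraph V) (H : LGraph W) (η : V → Set W) : Prop :=
  (∀ v, (η v).Nonempty) ∧ ∀ v w, G.Adj v w → ∀ x ∈ η v, ∀ y ∈ η w, H.Adj x y

/-- One step of a zigzag in `Hom(G, H)`: both multi-homomorphisms are comparable. -/
def mhStep {V W : Type*} (G : LGraph V) (H : LGraph W) (η η' : V → Set W) : Prop :=
  IsMultiHom G H η ∧ IsMultiHom G H η' ∧ ((∀ v, η v ⊆ η' v) ∨ (∀ v, η' v ⊆ η v))

/-- Two graph homomorphisms are ×-homotopic iff they lie in the same connected component of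
the Hom complex `Hom(G, H)`. -/
def XHomotopic {V W : Type*} (G : LGraph V) (H : LGraph W) (f g : V → W) : Prop :=
  Relation.ReflTransGen (mhStep G H) (fun v => {f v}) (fun v => {g v})

/-- `f : G → H` is a ×-homotopy equivalence. -/
def IsXHomotopyEquiv {V W : Type*} (G : LGraph V) (H : LGraph W) (f : V → W) : Prop :=
  IsGraphHom G H f ∧ ∃ h : W → V, IsGraphHom H G h ∧
    XHomotopic G G (h ∘ f) id ∧ XHomotopic H H (f ∘ h) id
/-- A subgraph of `G`: a set of vertices together with a symmetric set of edges of `G`. -/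
structure Subgraph {V : Type*} (G : LGraph V) where
  verts : Set V
  Adj : V → V → Prop
  adj_sub : ∀ v w, Adj v w → G.Adj v w
  symm : ∀ v w, Adj v w → Adj w v

/-- Containment of subgraphs of `G`. -/
def Subgraph.le {V : Type*} {G : LGraph V} (H H' : Subgraph G) : Prop :=
  H.verts ⊆ H'.verts ∧ ∀ v w, H.Adj v w → H'.Adj v w

/-- The neighborhood `ν_G(H)` of the subgraph `H` of `G`: its vertices are the vertices of `G`
adjacent to some vertex of `H`, and its edges are the edges of `G` with at least one endpoint
in `H`. -/
def gnbhd {V : Type*} (G : LGraph V) (H : Subgraph G) : Subgraph G where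
  verts := {v | ∃ w ∈ H.verts, G.Adj v w}
  Adj v w := G.Adj v w ∧ (v ∈ H.verts ∨ w ∈ H.verts)
  adj_sub := fun _ _ h => h.1
  symm := fun _ _ h => ⟨G.symm _ _ h.1, h.2.symm⟩

/-- The iterated neighborhood `ν^r_G(H)` (with `ν^0_G(H) = H`). -/
def gnbhdIter {V : Type*} (G : LGraph V) (H : Subgraph G) : ℕ → Subgraph G
  | 0 => H
  | r + 1 => gnbhd G (gnbhdIter G H r)
/-- `ρ` is a right action of the group `Γ` on the graph `T` by graph automorphisms. -/
def IsRightGraphAction (Γ : Type*) [Group Γ] {VT : Type*} (T : LGraph VT)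
    (ρ : Γ → VT → VT) : Prop :=
  (∀ x, ρ 1 x = x) ∧ (∀ γ γ' : Γ, ∀ x, ρ (γ * γ') x = ρ γ' (ρ γ x)) ∧
    ∀ γ : Γ, IsGraphHom T T (ρ γ)

/-- The orbit relation generating the quotient `Γ\(T × A(K))`: `γ·(x, v) = (xγ⁻¹, γv)`. -/
def ATrel {Γ VT VK : Type*} [Group Γ] (ρ : Γ → VT → VT) (a : Γ → VK → VK)
    (p q : VT × VK) : Prop :=
  ∃ γ : Γ, q = (ρ γ⁻¹ p.1, a γ p.2)

/-- The graph `A_T(K) = Γ\(T × A(K))`: the vertices are the Γ-orbits of pairs of a vertex of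
`T` and a vertex of `K`, and two orbits are adjacent iff they contain adjacent
representatives, a pair `(x, v)`, `(y, w)` being adjacent in `T × A(K)` iff `x`, `y` are
adjacent in `T` and `{v, w}` is a simplex of `K`. -/
def ATgraph {Γ VT VK : Type*} [Group Γ] (T : LGraph VT) (ρ : Γ → VT → VT)
    (K : Cplx VK) (a : Γ → VK → VK) : LGraph (Quot (ATrel ρ a)) where
  Adj c d := ∃ p q : VT × VK, Quot.mk (ATrel ρ a) p = c ∧ Quot.mk (ATrel ρ a) q = d ∧
    T.Adj p.1 q.1 ∧ ({p.2, q.2} : Set VK) ∈ K.faces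
  symm := by
    rintro c d ⟨p, q, hp, hq, hT, hK⟩
    exact ⟨q, p, hq, hp, T.symm _ _ hT, by rwa [Set.pair_comm]⟩

/-- The vertex set of `A_T(L)` inside `A_T(K)` (for a subcomplex `L` of `K`): the orbits of
pairs whose second component is a vertex of `L`. -/
def ATverts {Γ VT VK : Type*} [Group Γ] (ρ : Γ → VT → VT) (a : Γ → VK → VK)
    (L : Cplx VK) : Set (Quot (ATrel ρ a)) :=
  {c | ∃ p : VT × VK, Quot.mk (ATrel ρ a) p = c ∧ p.2 ∈ L.verts}
theorem nbhdIter_faces_subset {V : Type*} {K L : Cplx V} (hLK : L.faces ⊆ K.faces) :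
    ∀ r : ℕ, (nbhdIter K L r).faces ⊆ K.faces
  | 0 => hLK
  | r + 1 => fun σ hσ => by
      obtain ⟨v, -, h⟩ := hσ
      exact K.down_closed _ h _ (Set.subset_insert _ _)

/-- For a subcomplex `L` of `K`, the graph `A_T(L)` regarded as a subgraph of `A_T(K)`. -/
def ATsubgraph {Γ VT VK : Type*} [Group Γ] (T : LGraph VT) (ρ : Γ → VT → VT)
    (K : Cplx VK) (a : Γ → VK → VK) (L : Cplx VK) (hLK : L.faces ⊆ K.faces) :
    Subgraph (ATgraph T ρ K a) where
  verts := ATverts ρ a L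
  Adj c d := ∃ p q : VT × VK, Quot.mk (ATrel ρ a) p = c ∧ Quot.mk (ATrel ρ a) q = d ∧
    T.Adj p.1 q.1 ∧ ({p.2, q.2} : Set VK) ∈ L.faces
  adj_sub := by
    rintro c d ⟨p, q, hp, hq, hT, hL⟩
    exact ⟨p, q, hp, hq, hT, hLK hL⟩
  symm := by
    rintro c d ⟨p, q, hp, hq, hT, hL⟩
    exact ⟨q, p, hq, hp, T.symm _ _ hT, by rwa [Set.pair_comm]⟩

section Aux

variable {Γ VT VK : Type*} [Group Γ]

lemma subgraph_le_trans {V : Type*} {G : LGraph V} {A B C : Subgraph G}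
    (h1 : Subgraph.le A B) (h2 : Subgraph.le B C) : Subgraph.le A C :=
  ⟨h1.1.trans h2.1, fun v w h => h2.2 v w (h1.2 v w h)⟩

lemma gnbhd_mono {V : Type*} {G : LGraph V} {H H' : Subgraph G} (h : Subgraph.le H H') :
    Subgraph.le (gnbhd G H) (gnbhd G H') := by
  constructor
  · rintro v ⟨w, hw, hadj⟩; exact ⟨w, h.1 hw, hadj⟩
  · rintro v w ⟨hadj, hmem⟩; exact ⟨hadj, hmem.imp (fun hv => h.1 hv) (fun hw => h.1 hw)⟩

lemma ATrel_equivalence {T : LGraph VT} {ρ : Γ → VT → VT} (hT : IsRightGraphAction Γ T ρ)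
    {K : Cplx VK} {a : Γ → VK → VK} (ha : IsCplxAction Γ a K) :
    Equivalence (ATrel ρ a) := by
  constructor
  · intro p
    exact ⟨1, by rw [inv_one, hT.1, ha.1]⟩
  · rintro p q ⟨γ, rfl⟩
    refine ⟨γ⁻¹, Prod.ext ?_ ?_⟩
    · show p.1 = ρ γ⁻¹⁻¹ (ρ γ⁻¹ p.1)
      rw [inv_inv, ← hT.2.1, inv_mul_cancel, hT.1]
    · show p.2 = a γ⁻¹ (a γ p.2)
      rw [← ha.2.1, inv_mul_cancel, ha.1]
  · rintro p q r ⟨γ, rfl⟩ ⟨γ', rfl⟩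
    refine ⟨γ' * γ, Prod.ext ?_ ?_⟩
    · show ρ γ'⁻¹ (ρ γ⁻¹ p.1) = ρ (γ' * γ)⁻¹ p.1
      rw [mul_inv_rev, hT.2.1]
    · show a γ' (a γ p.2) = a (γ' * γ) p.2
      rw [ha.2.1]

lemma ATrel_of_quot_eq {T : LGraph VT} {ρ : Γ → VT → VT} (hT : IsRightGraphAction Γ T ρ)
    {K : Cplx VK} {a : Γ → VK → VK} (ha : IsCplxAction Γ a K)
    {p q : VT × VK} (h : Quot.mk (ATrel ρ a) p = Quot.mk (ATrel ρ a) q) :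
    ATrel ρ a p q :=
  (ATrel_equivalence hT ha).eqvGen_iff.mp (Quot.eqvGen_exact h)

lemma verts_inv {a : Γ → VK → VK} {M : Cplx VK}
    (hM : ∀ γ : Γ, ∀ σ ∈ M.faces, (a γ) '' σ ∈ M.faces) (γ : Γ) {v : VK}
    (hv : v ∈ M.verts) : a γ v ∈ M.verts := by
  have := hM γ {v} hv
  simpa [Cplx.verts] using this

lemma snd_mem_of_rel {T : LGraph VT} {ρ : Γ → VT → VT} {K : Cplx VK} {a : Γ → VK → VK}
    (ha : IsCplxAction Γ a K) {M : Cplx VK}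
    (hM : ∀ γ : Γ, ∀ σ ∈ M.faces, (a γ) '' σ ∈ M.faces) {p p' : VT × VK}
    (h : ATrel ρ a p p') (h2 : p'.2 ∈ M.verts) : p.2 ∈ M.verts := by
  obtain ⟨γ, rfl⟩ := h
  have hmem : a γ⁻¹ (a γ p.2) ∈ M.verts := verts_inv hM γ⁻¹ h2
  rwa [← ha.2.1, inv_mul_cancel, ha.1] at hmem

lemma nbhd_inv {K M : Cplx VK} {a : Γ → VK → VK}
    (hK : ∀ γ : Γ, ∀ σ ∈ K.faces, (a γ) '' σ ∈ K.faces)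
    (hM : ∀ γ : Γ, ∀ σ ∈ M.faces, (a γ) '' σ ∈ M.faces) :
    ∀ γ : Γ, ∀ σ ∈ (nbhd K M).faces, (a γ) '' σ ∈ (nbhd K M).faces := by
  rintro γ σ ⟨v, hv, h⟩
  exact ⟨a γ v, verts_inv hM γ hv, by rw [← Set.image_insert_eq]; exact hK γ _ h⟩

lemma nbhdIter_inv {K L : Cplx VK} {a : Γ → VK → VK}
    (hK : ∀ γ : Γ, ∀ σ ∈ K.faces, (a γ) '' σ ∈ K.faces)
    (hL : ∀ γ : Γ, ∀ σ ∈ L.faces, (a γ) '' σ ∈ L.faces) :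
    ∀ r : ℕ, ∀ γ : Γ, ∀ σ ∈ (nbhdIter K L r).faces, (a γ) '' σ ∈ (nbhdIter K L r).faces
  | 0 => hL
  | r + 1 => nbhd_inv hK (nbhdIter_inv hK hL r)

lemma step_le {T : LGraph VT} {ρ : Γ → VT → VT} (hT : IsRightGraphAction Γ T ρ)
    {K : Cplx VK} {a : Γ → VK → VK} (ha : IsCplxAction Γ a K) {M : Cplx VK}
    (hM : ∀ γ : Γ, ∀ σ ∈ M.faces, (a γ) '' σ ∈ M.faces)
    (hMK : M.faces ⊆ K.faces) (hNK : (nbhd K M).faces ⊆ K.faces) :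
    Subgraph.le (gnbhd (ATgraph T ρ K a) (ATsubgraph T ρ K a M hMK))
      (ATsubgraph T ρ K a (nbhd K M) hNK) := by
  constructor
  · rintro c ⟨d, ⟨p', hp'd, hp'2⟩, p, q, hpc, hqd, hTadj, hKface⟩
    have hrel : ATrel ρ a q p' := ATrel_of_quot_eq hT ha (hqd.trans hp'd.symm)
    have hq2 : q.2 ∈ M.verts := snd_mem_of_rel (T := T) ha hM hrel hp'2
    refine ⟨p, hpc, q.2, hq2, ?_⟩
    have : (insert q.2 {p.2} : Set VK) = {p.2, q.2} := Set.pair_comm q.2 p.2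
    rw [this]; exact hKface
  · rintro c d ⟨⟨p, q, hpc, hqd, hTadj, hKface⟩, hcd⟩
    refine ⟨p, q, hpc, hqd, hTadj, ?_⟩
    rcases hcd with hc | hd
    · obtain ⟨p', hp'c, hp'2⟩ := hc
      have hrel : ATrel ρ a p p' := ATrel_of_quot_eq hT ha (hpc.trans hp'c.symm)
      have hp2 : p.2 ∈ M.verts := snd_mem_of_rel (T := T) ha hM hrel hp'2
      exact ⟨p.2, hp2, by rw [Set.insert_eq_self.2 (by simp : p.2 ∈ ({p.2, q.2} : Set VK))]; exact hKface⟩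
    · obtain ⟨q', hq'd, hq'2⟩ := hd
      have hrel : ATrel ρ a q q' := ATrel_of_quot_eq hT ha (hqd.trans hq'd.symm)
      have hq2 : q.2 ∈ M.verts := snd_mem_of_rel (T := T) ha hM hrel hq'2
      exact ⟨q.2, hq2, by rw [Set.insert_eq_self.2 (by simp : q.2 ∈ ({p.2, q.2} : Set VK))]; exact hKface⟩

lemma gnbhdIter_AT_le_aux {T : LGraph VT} {ρ : Γ → VT → VT} (hT : IsRightGraphAction Γ T ρ)
    {K L : Cplx VK} {a : Γ → VK → VK} (ha : IsCplxAction Γ a K)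
    (haL : ∀ γ : Γ, ∀ σ ∈ L.faces, (a γ) '' σ ∈ L.faces) (hLK : L.faces ⊆ K.faces)
    (r : ℕ) :
    Subgraph.le (gnbhdIter (ATgraph T ρ K a) (ATsubgraph T ρ K a L hLK) r)
      (ATsubgraph T ρ K a (nbhdIter K L r) (nbhdIter_faces_subset hLK r)) := by
  induction r with
  | zero => exact ⟨subset_rfl, fun v w h => h⟩
  | succ r ih =>
    exact subgraph_le_trans (gnbhd_mono ih)
      (step_le hT ha (nbhdIter_inv ha.2.2 haL r) (nbhdIter_faces_subset hLK r)
        (nbhdIter_faces_subset hLK (r + 1)))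

end Aux

/-- Let Γ be a finite group, T a right Γ-graph, and (K,L) a pair of
Γ-simplicial complexes.  Then for every r ≥ 1, the r-neighborhood ν^r_{A_T(K)}(A_T(L)) is
contained in A_T(ν^r_K(L)), both regarded as subgraphs of A_T(K). -/
theorem gnbhdIter_AT_le {Γ VT VK : Type*} [Group Γ] [Finite Γ]
    (T : LGraph VT) (ρ : Γ → VT → VT) (hT : IsRightGraphAction Γ T ρ)
    (K L : Cplx VK) (a : Γ → VK → VK) (ha : IsCplxAction Γ a K)
    (haL : ∀ γ : Γ, ∀ σ ∈ L.faces, (a γ) '' σ ∈ L.faces) (hLK : L.faces ⊆ K.faces)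
    (r : ℕ) (hr : 1 ≤ r) :
    Subgraph.le (gnbhdIter (ATgraph T ρ K a) (ATsubgraph T ρ K a L hLK) r)
      (ATsubgraph T ρ K a (nbhdIter K L r) (nbhdIter_faces_subset hLK r)) := by
  exact gnbhdIter_AT_le_aux hT ha haL hLK r
end
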